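/- arXiv:2102.11834 — 3 statements merged into one kernel-verified Lean document; each statement's English description precedes it below -/
import Mathlib

section
/- Let (M, W, P, Q) be a many-to-many two-sided market with quotas and strict preferences, and let quotas Q₁ satisfy Q₁(m) ≤ Q(m) for all m ∈ M and Q₁(w) = Q(w) for all w ∈ W, and quotas Q₂ satisfy Q₂(m) = Q(m) for all m ∈ M and Q₂(w) ≤ Q(w) for all w ∈ W. Fix a proposing side and let μ, μ₁, μ₂ be the correspondingly optimal stable matchings under quotas Q, Q₁, Q₂ respectively (the outputs of the extended Gale–Shapley algorithm with that side proposing). Then μ₁(m)_k ≥_m μ(m)_k for all m ∈ M and k = 1,…,Q₁(m), μ₁(w)_k ≤_w μ(w)_k for all w ∈ W and k = 1,…,Q(w), μ₂(m)_k ≤_m μ(m)_k for all m ∈ M and k = 1,…,Q(m), and μ₂(w)_k ≥_w μ(w)_k for all w ∈ W and k = 1,…,Q₂(w). -/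
open scoped Classical

namespace Stmt13

/-- Strict preferences over partners in `W` plus staying single (`none`), encoded by a
rank function injective on the relevant alternatives; higher rank = more preferred. -/
def StrictPref {β : Type*} (pref : Option β → ℕ) (W : Finset β) : Prop :=
  Set.InjOn pref (insert none (Option.some '' (W : Set β)))

variable {α β : Type*}

/-- The set of partners of man `m` in the many-to-many matching `ν`. -/
noncomputable def ptnrsM (ν : Finset (α × β)) (m : α) : Finset β :=
  (ν.filter fun p => p.1 = m).image Prod.snd

/-- The set of partners of woman `w` in the many-to-many matching `ν`. -/
noncomputable def ptnrsW (ν : Finset (α × β)) (w : β) : Finset α :=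
  (ν.filter fun p => p.2 = w).image Prod.fst

/-- A valid many-to-many matching with quotas `qM`, `qW`: all pairs lie in `M × W`,
every person is matched at most their quota many times, and (being a set of pairs)
no man–woman pair is matched more than once. -/
def ValidQ (M : Finset α) (W : Finset β) (qM : α → ℕ) (qW : β → ℕ)
    (ν : Finset (α × β)) : Prop :=
  (∀ p ∈ ν, p.1 ∈ M ∧ p.2 ∈ W) ∧
  (∀ m, (ptnrsM ν m).card ≤ qM m) ∧ (∀ w, (ptnrsW ν w).card ≤ qW w)

/-- `x` is preferred to the set `P` of current partners padded with self-matches up to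
the quota `q`: `x` beats some current partner, or there is a free spot and `x` is
acceptable. -/
def PrefOver {X : Type*} (pref : Option X → ℕ) (q : ℕ) (P : Finset X) (x : X) : Prop :=
  (∃ y ∈ P, pref (some y) < pref (some x)) ∨ (P.card < q ∧ pref none < pref (some x))

/-- Individual rationality: no spot is filled by an unacceptable partner. -/
def IndRatQ (prefM : α → Option β → ℕ) (prefW : β → Option α → ℕ)
    (ν : Finset (α × β)) : Prop :=
  ∀ p ∈ ν, prefM p.1 none < prefM p.1 (some p.2) ∧ prefW p.2 none < prefW p.2 (some p.1)

/-- The (unmatched) pair `(m, w)` blocks `ν`. -/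
def BlocksQ (prefM : α → Option β → ℕ) (prefW : β → Option α → ℕ)
    (qM : α → ℕ) (qW : β → ℕ) (ν : Finset (α × β)) (m : α) (w : β) : Prop :=
  (m, w) ∉ ν ∧ PrefOver (prefM m) (qM m) (ptnrsM ν m) w ∧
    PrefOver (prefW w) (qW w) (ptnrsW ν w) m

/-- Stability of a many-to-many matching with quotas. -/
def StableQ (M : Finset α) (W : Finset β) (prefM : α → Option β → ℕ)
    (prefW : β → Option α → ℕ) (qM : α → ℕ) (qW : β → ℕ) (ν : Finset (α × β)) : Prop :=
  IndRatQ prefM prefW ν ∧ ∀ m ∈ M, ∀ w ∈ W, ¬ BlocksQ prefM prefW qM qW ν m w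

/-- The `k`-th best partner (0-indexed) of a person with preferences `pref` and quota
`q`, among the set `P` of actual partners padded with self-matches (`none`) up to the
quota: the list of partners is sorted from most to least preferred. -/
noncomputable def spot {X : Type*} (pref : Option X → ℕ) (q : ℕ) (P : Finset X) (k : ℕ) :
    Option X :=
  (((P.toList.map some ++ List.replicate (q - P.card) none).insertionSort
      fun x y => pref y ≤ pref x)[k]?).getD none

/-- The man-optimal stable matching with quotas (extended Gale–Shapley with men
proposing): every man's `k`-th best spot is at least as good as in any other stable
matching. -/
def ManOptQ (M : Finset α) (W : Finset β) (prefM : α → Option β → ℕ)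
    (prefW : β → Option α → ℕ) (qM : α → ℕ) (qW : β → ℕ) (ν : Finset (α × β)) : Prop :=
  ValidQ M W qM qW ν ∧ StableQ M W prefM prefW qM qW ν ∧
  ∀ ν' : Finset (α × β), ValidQ M W qM qW ν' → StableQ M W prefM prefW qM qW ν' →
    ∀ m ∈ M, ∀ k, k < qM m →
      prefM m (spot (prefM m) (qM m) (ptnrsM ν' m) k) ≤
        prefM m (spot (prefM m) (qM m) (ptnrsM ν m) k)

/-- The woman-optimal stable matching with quotas (extended Gale–Shapley with women
proposing). -/
def WomanOptQ (M : Finset α) (W : Finset β) (prefM : α → Option β → ℕ)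
    (prefW : β → Option α → ℕ) (qM : α → ℕ) (qW : β → ℕ) (ν : Finset (α × β)) : Prop :=
  ValidQ M W qM qW ν ∧ StableQ M W prefM prefW qM qW ν ∧
  ∀ ν' : Finset (α × β), ValidQ M W qM qW ν' → StableQ M W prefM prefW qM qW ν' →
    ∀ w ∈ W, ∀ k, k < qW w →
      prefW w (spot (prefW w) (qW w) (ptnrsW ν' w) k) ≤
        prefW w (spot (prefW w) (qW w) (ptnrsW ν w) k)

section SpotLemmas

variable {γ : Type*}

noncomputable def slist (f : Option γ → ℕ) (q : ℕ) (P : Finset γ) : List (Option γ) :=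
  (P.toList.map some ++ List.replicate (q - P.card) none).insertionSort fun x y => f y ≤ f x

lemma spot_eq_slist (f : Option γ → ℕ) (q : ℕ) (P : Finset γ) (k : ℕ) :
    spot f q P k = ((slist f q P)[k]?).getD none := rfl

lemma slist_perm (f : Option γ → ℕ) (q : ℕ) (P : Finset γ) :
    (slist f q P).Perm (P.toList.map some ++ List.replicate (q - P.card) none) :=
  List.perm_insertionSort _ _

lemma length_slist (f : Option γ → ℕ) (q : ℕ) (P : Finset γ) :
    (slist f q P).length = P.card + (q - P.card) := by
  rw [(slist_perm f q P).length_eq]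
  simp [List.length_append, Finset.length_toList]

lemma length_slist_of_le (f : Option γ → ℕ) {q : ℕ} {P : Finset γ} (h : P.card ≤ q) :
    (slist f q P).length = q := by
  rw [length_slist]; omega

lemma sorted_slist (f : Option γ → ℕ) (q : ℕ) (P : Finset γ) :
    (slist f q P).Pairwise fun x y => f y ≤ f x := by
  haveI : IsTotal (Option γ) fun x y => f y ≤ f x := ⟨fun a b => le_total (f b) (f a)⟩
  haveI : IsTrans (Option γ) fun x y => f y ≤ f x := ⟨fun a b c h1 h2 => le_trans h2 h1⟩
  exact List.pairwise_insertionSort _ _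

lemma mem_slist {f : Option γ → ℕ} {q : ℕ} {P : Finset γ} {x : Option γ} (hx : x ∈ slist f q P) :
    x = none ∨ ∃ y ∈ P, x = some y := by
  have := (slist_perm f q P).mem_iff.mp hx
  rcases List.mem_append.mp this with h | h
  · rcases List.mem_map.mp h with ⟨y, hy, rfl⟩
    exact Or.inr ⟨y, (Finset.mem_toList).mp hy, rfl⟩
  · exact Or.inl (List.eq_of_mem_replicate h)

lemma countP_toList (P : Finset γ) (p : γ → Bool) :
    P.toList.countP p = (P.filter (fun y => p y)).card := by
  have h1 : (P.filter (fun y => p y)).card = Multiset.card (Multiset.filter (fun y => p y = true) P.val) := by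
    rw [Finset.card, Finset.filter_val]
  rw [h1, ← Multiset.countP_eq_card_filter, ← Multiset.coe_toList P.val, Multiset.coe_countP]
  simp [Finset.toList]

lemma countP_slist (f : Option γ → ℕ) (q : ℕ) (P : Finset γ) (p : Option γ → Bool) :
    (slist f q P).countP p =
      (P.filter (fun y => p (some y))).card + if p none then q - P.card else 0 := by
  rw [(slist_perm f q P).countP_eq, List.countP_append, List.countP_map, List.countP_replicate]
  rw [countP_toList]
  rfl

/-- H2 : the first `k+1` entries of a descending sorted list beat `L[k]`. -/
lemma sorted_count_ge {f : Option γ → ℕ} {L : List (Option γ)}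
    (hs : L.Pairwise fun x y => f y ≤ f x) {k : ℕ} (hk : k < L.length) :
    k + 1 ≤ L.countP (fun x => decide (f (L[k]) ≤ f x)) := by
  set p : Option γ → Bool := fun x => decide (f (L[k]) ≤ f x) with hp
  have hsplit : L.take (k+1) ++ L.drop (k+1) = L := List.take_append_drop _ _
  have h1 : L.countP p = (L.take (k+1)).countP p + (L.drop (k+1)).countP p := by
    rw [← List.countP_append, hsplit]
  rw [h1]
  have h2 : (L.take (k+1)).countP p = (L.take (k+1)).length := by
    rw [List.countP_eq_length]
    intro a ha
    rcases List.mem_take_iff_getElem.mp ha with ⟨i, hi, rfl⟩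
    simp only [hp, decide_eq_true_eq]
    have hi' : i < L.length := (lt_min_iff.mp hi).2
    rcases lt_or_eq_of_le (Nat.lt_succ_iff.mp (lt_min_iff.mp hi).1) with h | h
    · have := hs.rel_get_of_lt (a := ⟨i, hi'⟩) (b := ⟨k, hk⟩) h
      simpa [List.get_eq_getElem, List.getElem_take] using this
    · subst h
      simp [List.getElem_take]
  have h3 : (L.take (k+1)).length = k + 1 := by
    rw [List.length_take]; omega
  omega

/-- H1 : if at least `k+1` entries have value `≥ n`, the `k`-th entry does. -/
lemma sorted_le_of_count {f : Option γ → ℕ} {L : List (Option γ)}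
    (hs : L.Pairwise fun x y => f y ≤ f x) {k n : ℕ} (hk : k < L.length)
    (hc : k + 1 ≤ L.countP (fun x => decide (n ≤ f x))) : n ≤ f (L[k]) := by
  by_contra hlt
  push_neg at hlt
  set p : Option γ → Bool := fun x => decide (n ≤ f x) with hp
  have hsplit : L.take k ++ L.drop k = L := List.take_append_drop _ _
  have h1 : L.countP p = (L.take k).countP p + (L.drop k).countP p := by
    rw [← List.countP_append, hsplit]
  have h2 : (L.drop k).countP p = 0 := by
    rw [List.countP_eq_zero]
    intro a ha
    rcases List.mem_iff_getElem.mp ha with ⟨j, hj, rfl⟩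
    simp only [hp, decide_eq_true_eq, not_le]
    have hkj : k + j < L.length := by
      have := hj; rw [List.length_drop] at this; omega
    have : f (L[k+j]) ≤ f (L[k]) := by
      rcases Nat.eq_zero_or_pos j with rfl | hjpos
      · simp
      · have := hs.rel_get_of_lt (a := ⟨k, hk⟩) (b := ⟨k+j, hkj⟩) (by simp; omega)
        simpa [List.get_eq_getElem] using this
    calc f ((L.drop k)[j]) = f (L[k+j]) := by rw [List.getElem_drop]
    _ ≤ f (L[k]) := this
    _ < n := hlt
  have h3 : (L.take k).countP p ≤ k := by
    calc _ ≤ (L.take k).length := List.countP_le_length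
    _ ≤ k := by rw [List.length_take]; omega
  omega

variable {γ : Type*}

/-- top-of-a-set cardinality. -/
lemma top_card (f : γ → ℕ) (V : Finset γ)
    (hinj : ∀ y ∈ V, ∀ z ∈ V, f y = f z → y = z) (t : ℕ) :
    (V.filter fun y => (V.filter fun z => f y < f z).card < t).card = min t V.card := by
  classical
  induction V using Finset.strongInduction generalizing t with
  | _ V IH =>
  rcases Nat.eq_zero_or_pos t with rfl | ht
  · simp
  rcases V.eq_empty_or_nonempty with rfl | hV
  · simp
  obtain ⟨a, haV, hamax⟩ := Finset.exists_max_image V f hV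
  obtain ⟨t, rfl⟩ : ∃ t', t = t' + 1 := ⟨t - 1, by omega⟩
  have herase : V.erase a ⊂ V := Finset.erase_ssubset haV
  have hinj' : ∀ y ∈ V.erase a, ∀ z ∈ V.erase a, f y = f z → y = z := fun y hy z hz =>
    hinj y (Finset.mem_of_mem_erase hy) z (Finset.mem_of_mem_erase hz)
  have hkey : (V.filter fun y => (V.filter fun z => f y < f z).card < t + 1) =
      insert a ((V.erase a).filter fun y => ((V.erase a).filter fun z => f y < f z).card < t) := by
    ext y
    simp only [Finset.mem_filter, Finset.mem_insert, Finset.mem_erase]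
    constructor
    · rintro ⟨hyV, hcard⟩
      by_cases hya : y = a
      · exact Or.inl hya
      · refine Or.inr ⟨⟨hya, hyV⟩, ?_⟩
        have hfya : f y < f a := by
          rcases lt_or_eq_of_le (hamax y hyV) with h | h
          · exact h
          · exact absurd (hinj y hyV a haV h) hya
        have hins : (V.filter fun z => f y < f z) =
            insert a ((V.erase a).filter fun z => f y < f z) := by
          ext z
          simp only [Finset.mem_filter, Finset.mem_insert, Finset.mem_erase]
          constructor
          · rintro ⟨hzV, hfz⟩
            by_cases hza : z = a
            · exact Or.inl hza
            · exact Or.inr ⟨⟨hza, hzV⟩, hfz⟩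
          · rintro (rfl | ⟨⟨_, hzV⟩, hfz⟩)
            · exact ⟨haV, hfya⟩
            · exact ⟨hzV, hfz⟩
        have hnotmem : a ∉ (V.erase a).filter fun z => f y < f z := by
          simp [Finset.mem_filter]
        rw [hins, Finset.card_insert_of_notMem hnotmem] at hcard
        omega
    · rintro (rfl | ⟨⟨hya, hyV⟩, hcard⟩)
      · refine ⟨haV, ?_⟩
        have : (V.filter fun z => f y < f z) = ∅ := by
          rw [Finset.filter_eq_empty_iff]
          intro z hz
          exact not_lt.mpr (hamax z hz)
        rw [this]; simp
      · refine ⟨hyV, ?_⟩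
        have hsub : (V.filter fun z => f y < f z) ⊆
            insert a ((V.erase a).filter fun z => f y < f z) := by
          intro z hz
          rcases Finset.mem_filter.mp hz with ⟨hzV, hfz⟩
          by_cases hza : z = a
          · exact Finset.mem_insert.mpr (Or.inl hza)
          · exact Finset.mem_insert.mpr (Or.inr (Finset.mem_filter.mpr ⟨Finset.mem_erase.mpr ⟨hza, hzV⟩, hfz⟩))
        have := Finset.card_le_card hsub
        have hnotmem : a ∉ (V.erase a).filter fun z => f y < f z := by
          simp [Finset.mem_filter]
        rw [Finset.card_insert_of_notMem hnotmem] at this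
        omega
  rw [hkey]
  have hnotmem : a ∉ (V.erase a).filter fun y => ((V.erase a).filter fun z => f y < f z).card < t := by
    simp [Finset.mem_filter]
  rw [Finset.card_insert_of_notMem hnotmem, IH _ herase hinj' t, Finset.card_erase_of_mem haV]
  have : 1 ≤ V.card := Finset.card_pos.mpr hV
  omega

lemma fnone_le_spot (f : Option γ → ℕ) (q : ℕ) (P : Finset γ) (k : ℕ)
    (hacc : ∀ y ∈ P, f none < f (some y)) : f none ≤ f (spot f q P k) := by
  rw [spot_eq_slist]
  by_cases h : k < (slist f q P).length
  · rw [List.getElem?_eq_getElem h]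
    simp only [Option.getD_some]
    rcases mem_slist (List.getElem_mem h) with h' | ⟨y, hy, h'⟩
    · rw [h']
    · rw [h']; exact le_of_lt (hacc y hy)
  · rw [List.getElem?_eq_none (by omega)]
    simp

/-- key counting step : if at least `k+1` elements of `P'` have value `≥ n`, then
the `k`-th spot of `P'` has value `≥ n`. -/
lemma le_spot_of_count (f : Option γ → ℕ) {q : ℕ} {P' : Finset γ} {k n : ℕ}
    (hq : P'.card ≤ q) (hk : k < q) (hnone : f none < n)
    (hc : k + 1 ≤ (P'.filter fun y => n ≤ f (some y)).card) :
    n ≤ f (spot f q P' k) := by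
  have hlen : (slist f q P').length = q := length_slist_of_le f hq
  have hk' : k < (slist f q P').length := by omega
  rw [spot_eq_slist, List.getElem?_eq_getElem hk']
  simp only [Option.getD_some]
  apply sorted_le_of_count (sorted_slist f q P') hk'
  rw [countP_slist]
  simp only [decide_eq_true_eq, if_neg (not_le.mpr hnone), add_zero]
  exact hc

/-- dually : the `k`-th spot (if it is an actual partner) has at least `k+1`
elements of `P` weakly above it. -/
lemma count_spot_ge (f : Option γ → ℕ) {q : ℕ} (P : Finset γ) (k : ℕ) {x : γ}
    (hx : spot f q P k = some x) (hnone : f none < f (some x)) :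
    k + 1 ≤ (P.filter fun y => f (some x) ≤ f (some y)).card := by
  by_cases h : k < (slist f q P).length
  · have hval : (slist f q P)[k] = some x := by
      rw [spot_eq_slist, List.getElem?_eq_getElem h] at hx
      simpa using hx
    have := sorted_count_ge (sorted_slist f q P) h
    rw [hval, countP_slist] at this
    simp only [decide_eq_true_eq, if_neg (not_le.mpr hnone), add_zero] at this
    exact this
  · exfalso
    rw [spot_eq_slist, List.getElem?_eq_none (by omega)] at hx
    simp at hx

lemma spot_none_or_mem (f : Option γ → ℕ) (q : ℕ) (P : Finset γ) (k : ℕ) :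
    spot f q P k = none ∨ ∃ y ∈ P, spot f q P k = some y := by
  rw [spot_eq_slist]
  by_cases h : k < (slist f q P).length
  · rw [List.getElem?_eq_getElem h]
    simp only [Option.getD_some]
    rcases mem_slist (List.getElem_mem h) with h' | ⟨y, hy, h'⟩
    · exact Or.inl h'
    · exact Or.inr ⟨y, hy, h'⟩
  · rw [List.getElem?_eq_none (by omega)]
    simp

/-- Spot comparison, receiver side. -/
lemma spotB (f : Option γ → ℕ) (P P' : Finset γ) (qa qb k : ℕ)
    (hP' : P'.card ≤ qb) (hk : k < qb)
    (haccP : ∀ x ∈ P, f none < f (some x)) (haccP' : ∀ x ∈ P', f none < f (some x))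
    (hkey : ∀ x ∈ P, x ∉ P' → P'.card = qb ∧ ∀ y ∈ P', f (some x) < f (some y)) :
    f (spot f qa P k) ≤ f (spot f qb P' k) := by
  rcases spot_none_or_mem f qa P k with hnone | ⟨x, hxP, hx⟩
  · rw [hnone]
    exact fnone_le_spot f qb P' k haccP'
  · rw [hx]
    set n := f (some x) with hn
    have hnnone : f none < n := haccP x hxP
    have hcount : k + 1 ≤ (P.filter fun y => n ≤ f (some y)).card := count_spot_ge f P k hx hnnone
    apply le_spot_of_count f hP' hk hnnone
    by_cases hsub : ∀ y ∈ P.filter fun y => n ≤ f (some y), y ∈ P'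
    · have h1 : (P.filter fun y => n ≤ f (some y)) ⊆ (P'.filter fun y => n ≤ f (some y)) := by
        intro y hy
        exact Finset.mem_filter.mpr ⟨hsub y hy, (Finset.mem_filter.mp hy).2⟩
      exact le_trans hcount (Finset.card_le_card h1)
    · push_neg at hsub
      obtain ⟨x', hx'mem, hx'P'⟩ := hsub
      rcases Finset.mem_filter.mp hx'mem with ⟨hx'P, hnx'⟩
      obtain ⟨hcardP', hall⟩ := hkey x' hx'P hx'P'
      have h1 : (P'.filter fun y => n ≤ f (some y)) = P' := by
        rw [Finset.filter_eq_self]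
        intro y hy
        exact le_trans hnx' (le_of_lt (hall y hy))
      rw [h1, hcardP']
      omega

/-- Spot comparison, proposer side : the greedy top-`q1` of `U` spot-dominates any
subset of `U`. -/
lemma spotA (f : Option γ → ℕ) (U S' : Finset γ) (q1 q2 k : ℕ)
    (hinj : ∀ y ∈ U, ∀ z ∈ U, f (some y) = f (some z) → y = z)
    (hacc : ∀ y ∈ U, f none < f (some y)) (hsub : S' ⊆ U) (hk : k < q1) :
    f (spot f q2 S' k) ≤
      f (spot f q1 (U.filter fun w => (U.filter fun y => f (some w) < f (some y)).card < q1) k) := by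
  set S := U.filter fun w => (U.filter fun y => f (some w) < f (some y)).card < q1 with hS
  have hSsub : S ⊆ U := Finset.filter_subset _ _
  have hScard : S.card = min q1 U.card := top_card (fun y => f (some y)) U hinj q1
  have hSq : S.card ≤ q1 := by omega
  rcases spot_none_or_mem f q2 S' k with hnone | ⟨x, hxS', hx⟩
  · rw [hnone]
    exact fnone_le_spot f q1 S k (fun y hy => hacc y (hSsub hy))
  · rw [hx]
    set n := f (some x) with hn
    have hnnone : f none < n := hacc x (hsub hxS')
    have hcount : k + 1 ≤ (S'.filter fun y => n ≤ f (some y)).card := count_spot_ge f S' k hx hnnone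
    apply le_spot_of_count f hSq hk hnnone
    -- V : elements of U with value ≥ n
    set V := U.filter fun y => n ≤ f (some y) with hV
    have hVcard : k + 1 ≤ V.card := by
      refine le_trans hcount (Finset.card_le_card ?_)
      intro y hy
      rcases Finset.mem_filter.mp hy with ⟨hyS', hny⟩
      exact Finset.mem_filter.mpr ⟨hsub hyS', hny⟩
    have hinjV : ∀ y ∈ V, ∀ z ∈ V, f (some y) = f (some z) → y = z := fun y hy z hz =>
      hinj y (Finset.mem_filter.mp hy).1 z (Finset.mem_filter.mp hz).1
    set V' := V.filter fun y => (V.filter fun z => f (some y) < f (some z)).card < k + 1 with hV'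
    have hV'card : V'.card = k + 1 := by
      rw [hV', top_card (fun y => f (some y)) V hinjV (k+1)]
      omega
    have hV'sub : V' ⊆ S.filter fun y => n ≤ f (some y) := by
      intro y hy
      rcases Finset.mem_filter.mp hy with ⟨hyV, hyc⟩
      rcases Finset.mem_filter.mp hyV with ⟨hyU, hyn⟩
      have heq : (U.filter fun z => f (some y) < f (some z)) =
          (V.filter fun z => f (some y) < f (some z)) := by
        ext z
        simp only [Finset.mem_filter, hV]
        constructor
        · rintro ⟨hzU, hfz⟩
          exact ⟨⟨hzU, le_trans hyn (le_of_lt hfz)⟩, hfz⟩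
        · rintro ⟨⟨hzU, _⟩, hfz⟩
          exact ⟨hzU, hfz⟩
      refine Finset.mem_filter.mpr ⟨Finset.mem_filter.mpr ⟨hyU, ?_⟩, hyn⟩
      rw [heq]
      omega
    calc k + 1 = V'.card := hV'card.symm
    _ ≤ _ := Finset.card_le_card hV'sub

end SpotLemmas

section Market

variable {α β : Type*}

lemma mem_ptnrsM {ν : Finset (α × β)} {m : α} {w : β} :
    w ∈ ptnrsM ν m ↔ (m, w) ∈ ν := by
  constructor
  · intro h
    rcases Finset.mem_image.mp h with ⟨⟨a, b⟩, hp, rfl⟩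
    rcases Finset.mem_filter.mp hp with ⟨hpν, hp1⟩
    simp only at hp1
    subst hp1
    exact hpν
  · intro h
    exact Finset.mem_image.mpr ⟨(m, w), Finset.mem_filter.mpr ⟨h, rfl⟩, rfl⟩

lemma mem_ptnrsW {ν : Finset (α × β)} {m : α} {w : β} :
    m ∈ ptnrsW ν w ↔ (m, w) ∈ ν := by
  constructor
  · intro h
    rcases Finset.mem_image.mp h with ⟨⟨a, b⟩, hp, rfl⟩
    rcases Finset.mem_filter.mp hp with ⟨hpν, hp2⟩
    simp only at hp2
    subst hp2
    exact hpν
  · intro h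
    exact Finset.mem_image.mpr ⟨(m, w), Finset.mem_filter.mpr ⟨h, rfl⟩, rfl⟩

variable (M : Finset α) (W : Finset β) (pm : α → Option β → ℕ) (pw : β → Option α → ℕ)

/-- The set of acceptable partners of proposer `m`. -/
noncomputable def acc (m : α) : Finset β := W.filter fun w => pm m none < pm m (some w)

/-- Acceptable partners of `m` that have not rejected `m` yet. -/
noncomputable def avail (R : Finset (α × β)) (m : α) : Finset β :=
  (acc W pm m).filter fun w => (m, w) ∉ R

/-- The tentative proposal set of `m` : his `qa m` best available partners. -/
noncomputable def tset (qa : α → ℕ) (R : Finset (α × β)) (m : α) : Finset β :=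
  (avail W pm R m).filter fun w =>
    ((avail W pm R m).filter fun y => pm m (some w) < pm m (some y)).card < qa m

/-- The pool of current proposers at receiver `w`. -/
noncomputable def pool (qa : α → ℕ) (R : Finset (α × β)) (w : β) : Finset α :=
  M.filter fun m => w ∈ tset W pm qa R m

/-- One-rejection-at-a-time extended Gale–Shapley reachability. -/
inductive Reach (qa : α → ℕ) (qwa : β → ℕ) : Finset (α × β) → Prop
  | base : Reach qa qwa ∅
  | step (R : Finset (α × β)) (w : β) (m : α) (hR : Reach qa qwa R) (hw : w ∈ W)
      (hm : m ∈ pool M W pm qa R w)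
      (hcond : pw w (some m) < pw w none ∨
        (qwa w < (pool M W pm qa R w).card ∧
          ∀ m' ∈ pool M W pm qa R w, pw w (some m) ≤ pw w (some m'))) :
      Reach qa qwa (insert (m, w) R)

/-- A terminal state of the algorithm. -/
def IsFinal (qa : α → ℕ) (qwa : β → ℕ) (R : Finset (α × β)) : Prop :=
  Reach M W pm pw qa qwa R ∧
    ∀ w ∈ W, (∀ m ∈ pool M W pm qa R w, ¬ pw w (some m) < pw w none) ∧
      (pool M W pm qa R w).card ≤ qwa w

/-- The matching induced by a state. -/
noncomputable def gmatch (qa : α → ℕ) (R : Finset (α × β)) : Finset (α × β) :=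
  (M ×ˢ W).filter fun p => p.2 ∈ tset W pm qa R p.1

variable {M W pm pw}

lemma tset_subset_avail {qa : α → ℕ} {R : Finset (α × β)} {m : α} :
    tset W pm qa R m ⊆ avail W pm R m := Finset.filter_subset _ _

lemma avail_subset_W {R : Finset (α × β)} {m : α} : avail W pm R m ⊆ W :=
  fun w hw => Finset.mem_filter.mp ((Finset.filter_subset _ _) hw) |>.1

lemma acc_of_mem_avail {R : Finset (α × β)} {m : α} {w : β} (h : w ∈ avail W pm R m) :
    pm m none < pm m (some w) :=
  (Finset.mem_filter.mp ((Finset.filter_subset _ _) h)).2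

lemma not_rejected_of_mem_avail {R : Finset (α × β)} {m : α} {w : β}
    (h : w ∈ avail W pm R m) : (m, w) ∉ R := (Finset.mem_filter.mp h).2

lemma mem_avail_iff {R : Finset (α × β)} {m : α} {w : β} :
    w ∈ avail W pm R m ↔ w ∈ W ∧ pm m none < pm m (some w) ∧ (m, w) ∉ R := by
  simp [avail, acc, Finset.mem_filter, and_assoc]

lemma mem_pool_iff {qa : α → ℕ} {R : Finset (α × β)} {m : α} {w : β} :
    m ∈ pool M W pm qa R w ↔ m ∈ M ∧ w ∈ tset W pm qa R m := Finset.mem_filter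

/-- Monotonicity of proposals : once proposed-to, stays proposed-to unless rejected. -/
lemma tset_mono {qa : α → ℕ} {R R' : Finset (α × β)} (hRR' : R ⊆ R') {m : α} {w : β}
    (h : w ∈ tset W pm qa R m) (hw : (m, w) ∉ R') : w ∈ tset W pm qa R' m := by
  rcases Finset.mem_filter.mp h with ⟨hav, hcard⟩
  rcases mem_avail_iff.mp hav with ⟨hwW, haccw, _⟩
  refine Finset.mem_filter.mpr ⟨mem_avail_iff.mpr ⟨hwW, haccw, hw⟩, ?_⟩
  refine lt_of_le_of_lt (Finset.card_le_card ?_) hcard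
  intro y hy
  rcases Finset.mem_filter.mp hy with ⟨hyav, hybetter⟩
  rcases mem_avail_iff.mp hyav with ⟨hyW, hyacc, hyR'⟩
  exact Finset.mem_filter.mpr ⟨mem_avail_iff.mpr ⟨hyW, hyacc, fun hc => hyR' (hRR' hc)⟩, hybetter⟩

/-- The proposal set has size `min (qa m) (avail)`. -/
lemma card_tset {qa : α → ℕ} {R : Finset (α × β)} {m : α} (hinj : StrictPref (pm m) W) :
    (tset W pm qa R m).card = min (qa m) (avail W pm R m).card := by
  apply top_card
  intro y hy z hz hyz
  have h1 : (some y : Option β) ∈ insert none (Option.some '' (W : Set β)) :=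
    Set.mem_insert_of_mem _ ⟨y, Finset.mem_coe.mpr (avail_subset_W hy), rfl⟩
  have h2 : (some z : Option β) ∈ insert none (Option.some '' (W : Set β)) :=
    Set.mem_insert_of_mem _ ⟨z, Finset.mem_coe.mpr (avail_subset_W hz), rfl⟩
  have := hinj h1 h2 hyz
  simpa using this

lemma tset_full_of_not_mem {qa : α → ℕ} {R : Finset (α × β)} {m : α} {w : β}
    (hinj : StrictPref (pm m) W)
    (hav : w ∈ avail W pm R m) (hnot : w ∉ tset W pm qa R m) :
    (tset W pm qa R m).card = qa m ∧
      ∀ y ∈ tset W pm qa R m, pm m (some w) < pm m (some y) := by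
  classical
  have hinj' : ∀ y ∈ avail W pm R m, ∀ z ∈ avail W pm R m,
      pm m (some y) = pm m (some z) → y = z := by
    intro y hy z hz hyz
    have h1 : (some y : Option β) ∈ insert none (Option.some '' (W : Set β)) :=
      Set.mem_insert_of_mem _ ⟨y, Finset.mem_coe.mpr (avail_subset_W hy), rfl⟩
    have h2 : (some z : Option β) ∈ insert none (Option.some '' (W : Set β)) :=
      Set.mem_insert_of_mem _ ⟨z, Finset.mem_coe.mpr (avail_subset_W hz), rfl⟩
    simpa using hinj h1 h2 hyz
  have hbig : qa m ≤ ((avail W pm R m).filter fun y => pm m (some w) < pm m (some y)).card := by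
    by_contra hc
    exact hnot (Finset.mem_filter.mpr ⟨hav, by omega⟩)
  set V := (avail W pm R m).filter fun y => pm m (some w) < pm m (some y) with hV
  have hVsub : V ⊆ avail W pm R m := Finset.filter_subset _ _
  have hinjV : ∀ y ∈ V, ∀ z ∈ V, pm m (some y) = pm m (some z) → y = z :=
    fun y hy z hz => hinj' y (hVsub hy) z (hVsub hz)
  set V' := V.filter fun y => (V.filter fun z => pm m (some y) < pm m (some z)).card < qa m
    with hV'
  have hV'card : V'.card = qa m := by
    rw [hV', top_card (fun y => pm m (some y)) V hinjV (qa m)]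
    omega
  have hV'tset : V' ⊆ tset W pm qa R m := by
    intro y hy
    rcases Finset.mem_filter.mp hy with ⟨hyV, hyc⟩
    rcases Finset.mem_filter.mp hyV with ⟨hyav, hywlt⟩
    have heq : ((avail W pm R m).filter fun z => pm m (some y) < pm m (some z)) =
        V.filter fun z => pm m (some y) < pm m (some z) := by
      ext z
      simp only [Finset.mem_filter, hV]
      constructor
      · rintro ⟨hzav, hz⟩
        exact ⟨⟨hzav, lt_trans hywlt hz⟩, hz⟩
      · rintro ⟨⟨hzav, _⟩, hz⟩
        exact ⟨hzav, hz⟩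
    refine Finset.mem_filter.mpr ⟨hyav, ?_⟩
    rw [heq]
    omega
  have hle : (tset W pm qa R m).card ≤ qa m := by
    rw [card_tset hinj]; omega
  have := Finset.eq_of_subset_of_card_le hV'tset (by omega)
  constructor
  · rw [← this, hV'card]
  · intro y hy
    rw [← this] at hy
    exact (Finset.mem_filter.mp ((Finset.filter_subset _ _) hy)).2

lemma partners_subset_avail {qb : α → ℕ} {qwb : β → ℕ} {ν R : Finset (α × β)} {m : α}
    (hIR : IndRatQ pm pw ν) (hval : ValidQ M W qb qwb ν)
    (hdisj : ∀ p ∈ R, p ∉ ν) : ptnrsM ν m ⊆ avail W pm R m := by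
  intro y hy
  have hmem : (m, y) ∈ ν := mem_ptnrsM.mp hy
  refine mem_avail_iff.mpr ⟨(hval.1 _ hmem).2, (hIR _ hmem).1, fun hc => hdisj _ hc hmem⟩

/-- The decisive fact : a proposer currently proposing to `w` prefers `w` over his
partners in any matching `ν` disjoint from the rejections (with weakly larger quota). -/
lemma prefOver_of_tset {qa qb : α → ℕ} {qwb : β → ℕ} {R ν : Finset (α × β)} {m : α} {w : β}
    (hM : ∀ m ∈ M, StrictPref (pm m) W) (hmM : m ∈ M) (hq : qa m ≤ qb m)
    (hIR : IndRatQ pm pw ν) (hval : ValidQ M W qb qwb ν) (hdisj : ∀ p ∈ R, p ∉ ν)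
    (hw : w ∈ tset W pm qa R m) (hnot : (m, w) ∉ ν) :
    PrefOver (pm m) (qb m) (ptnrsM ν m) w := by
  classical
  rcases Finset.mem_filter.mp hw with ⟨hav, hcard⟩
  have hsub : ptnrsM ν m ⊆ avail W pm R m := partners_subset_avail hIR hval hdisj
  by_cases hworse : ∃ y ∈ ptnrsM ν m, pm m (some y) < pm m (some w)
  · exact Or.inl hworse
  · push_neg at hworse
    have hstrict : ∀ y ∈ ptnrsM ν m, pm m (some w) < pm m (some y) := by
      intro y hy
      rcases lt_or_eq_of_le (hworse y hy) with h | h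
      · exact h
      · exfalso
        have h1 : (some w : Option β) ∈ insert none (Option.some '' (W : Set β)) :=
          Set.mem_insert_of_mem _ ⟨w, Finset.mem_coe.mpr (avail_subset_W hav), rfl⟩
        have h2 : (some y : Option β) ∈ insert none (Option.some '' (W : Set β)) :=
          Set.mem_insert_of_mem _ ⟨y, Finset.mem_coe.mpr (avail_subset_W (hsub hy)), rfl⟩
        have := hM m hmM h1 h2 h
        simp only [Option.some.injEq] at this
        subst this
        exact hnot (mem_ptnrsM.mp hy)
    have hsubset : ptnrsM ν m ⊆
        (avail W pm R m).filter fun y => pm m (some w) < pm m (some y) := by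
      intro y hy
      exact Finset.mem_filter.mpr ⟨hsub hy, hstrict y hy⟩
    have : (ptnrsM ν m).card < qa m := lt_of_le_of_lt (Finset.card_le_card hsubset) hcard
    exact Or.inr ⟨by omega, acc_of_mem_avail hav⟩

lemma exists_mem_notmem {s t : Finset α} (h : t.card < s.card) : ∃ a ∈ s, a ∉ t := by
  by_contra hc
  push_neg at hc
  exact absurd (Finset.card_le_card fun a ha => hc a ha) (by omega)

lemma pw_lt_of_ne {w : β} (hW : ∀ w ∈ W, StrictPref (pw w) M) (hw : w ∈ W) {x y : α}
    (hx : x ∈ M) (hy : y ∈ M) (hne : x ≠ y) (hle : pw w (some x) ≤ pw w (some y)) :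
    pw w (some x) < pw w (some y) := by
  rcases lt_or_eq_of_le hle with h | h
  · exact h
  · exfalso
    have h1 : (some x : Option α) ∈ insert none (Option.some '' (M : Set α)) :=
      Set.mem_insert_of_mem _ ⟨x, Finset.mem_coe.mpr hx, rfl⟩
    have h2 : (some y : Option α) ∈ insert none (Option.some '' (M : Set α)) :=
      Set.mem_insert_of_mem _ ⟨y, Finset.mem_coe.mpr hy, rfl⟩
    have := hW w hw h1 h2 h
    simp only [Option.some.injEq] at this
    exact hne this

lemma reach_subset {qa : α → ℕ} {qwa : β → ℕ} {R : Finset (α × β)}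
    (h : Reach M W pm pw qa qwa R) : R ⊆ M ×ˢ W := by
  induction h with
  | base => exact Finset.empty_subset _
  | step R w m hR hw hm hcond IH =>
      refine Finset.insert_subset (Finset.mem_product.mpr ⟨(mem_pool_iff.mp hm).1, hw⟩) IH

/-- Cross-market invariant : every rejection is incompatible with any stable matching
of a market with weakly larger proposer quotas and weakly smaller receiver quotas. -/
lemma reach_disjoint {qa qb : α → ℕ} {qwa qwb : β → ℕ} {R ν : Finset (α × β)}
    (hM : ∀ m ∈ M, StrictPref (pm m) W) (hW : ∀ w ∈ W, StrictPref (pw w) M)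
    (hq : ∀ m ∈ M, qa m ≤ qb m) (hqw : ∀ w ∈ W, qwb w ≤ qwa w)
    (hval : ValidQ M W qb qwb ν) (hstab : StableQ M W pm pw qb qwb ν)
    (hreach : Reach M W pm pw qa qwa R) : ∀ p ∈ R, p ∉ ν := by
  induction hreach with
  | base => simp
  | step R w m hR hw hm hcond IH =>
      intro p hp
      rcases Finset.mem_insert.mp hp with rfl | hpold
      swap
      · exact IH p hpold
      intro hmem
      rcases hcond with hbad | ⟨hover, hmin⟩
      · have h2 : pw w none < pw w (some m) := (hstab.1 (m, w) hmem).2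
        omega
      · -- overflow rejection of the pool minimum
        have hmM : m ∈ M := (mem_pool_iff.mp hm).1
        have hmPν : m ∈ ptnrsW ν w := mem_ptnrsW.mpr hmem
        have hcard1 : ((ptnrsW ν w).erase m).card < ((pool M W pm qa R w).erase m).card := by
          have h1 : (ptnrsW ν w).card ≤ qwb w := hval.2.2 w
          have h2 := Finset.card_erase_of_mem hmPν
          have h3 := Finset.card_erase_of_mem hm
          have h4 : (ptnrsW ν w).card ≥ 1 := Finset.card_pos.mpr ⟨m, hmPν⟩
          have := hqw w hw
          omega
        obtain ⟨m', hm'pool, hm'notν⟩ := exists_mem_notmem hcard1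
        have hm'ne : m' ≠ m := (Finset.mem_erase.mp hm'pool).1
        have hm'pool' : m' ∈ pool M W pm qa R w := Finset.mem_of_mem_erase hm'pool
        have hm'M : m' ∈ M := (mem_pool_iff.mp hm'pool').1
        have hm'Pν : (m', w) ∉ ν := by
          intro hc
          exact hm'notν (Finset.mem_erase.mpr ⟨hm'ne, mem_ptnrsW.mpr hc⟩)
        have hblock : BlocksQ pm pw qb qwb ν m' w := by
          refine ⟨hm'Pν, ?_, ?_⟩
          · exact prefOver_of_tset hM hm'M (hq m' hm'M) hstab.1 hval IH
              (mem_pool_iff.mp hm'pool').2 hm'Pν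
          · exact Or.inl ⟨m, hmPν, pw_lt_of_ne hW hw hmM hm'M (Ne.symm hm'ne)
              (hmin m' hm'pool')⟩
        exact hstab.2 m' hm'M w hw hblock

/-- Once rejected, the receiver's pool stays full with strictly better proposers. -/
lemma reach_full {qa : α → ℕ} {qwa : β → ℕ} {R : Finset (α × β)}
    (hW : ∀ w ∈ W, StrictPref (pw w) M)
    (hreach : Reach M W pm pw qa qwa R) :
    ∀ m₀ w₀, (m₀, w₀) ∈ R → pw w₀ none < pw w₀ (some m₀) →
      qwa w₀ ≤ ((pool M W pm qa R w₀).filter fun x => pw w₀ (some m₀) < pw w₀ (some x)).card := by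
  induction hreach with
  | base => simp
  | step R w m hR hw hm hcond IH =>
      intro m₀ w₀ hp hacc₀
      have hsub := reach_subset hR
      have hm₀M : m₀ ∈ M := by
        rcases Finset.mem_insert.mp hp with heq | hpold
        · rw [Prod.mk.injEq] at heq
          obtain ⟨rfl, rfl⟩ := heq
          exact (mem_pool_iff.mp hm).1
        · exact (Finset.mem_product.mp (hsub hpold)).1
      have hmM : m ∈ M := (mem_pool_iff.mp hm).1
      have hpoolmono : ∀ x, x ∈ pool M W pm qa R w₀ → x ≠ m ∨ w₀ ≠ w →
          x ∈ pool M W pm qa (insert (m, w) R) w₀ := by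
        intro x hx hor
        rcases mem_pool_iff.mp hx with ⟨hxM, hxt⟩
        refine mem_pool_iff.mpr ⟨hxM, tset_mono (Finset.subset_insert _ _) hxt ?_⟩
        intro hc
        rcases Finset.mem_insert.mp hc with heq | hcR
        · rw [Prod.mk.injEq] at heq
          rcases hor with h | h
          · exact h heq.1
          · exact h heq.2
        · exact not_rejected_of_mem_avail (tset_subset_avail hxt) hcR
      rcases Finset.mem_insert.mp hp with heq | hpold
      · -- the newly rejected pair
        rw [Prod.mk.injEq] at heq
        obtain ⟨rfl, rfl⟩ := heq
        rcases hcond with hbad | ⟨hover, hmin⟩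
        · omega
        · have hsub2 : (pool M W pm qa R w₀).erase m₀ ⊆
              (pool M W pm qa (insert (m₀, w₀) R) w₀).filter
                fun x => pw w₀ (some m₀) < pw w₀ (some x) := by
            intro x hx
            have hxpool := Finset.mem_of_mem_erase hx
            have hxne := (Finset.mem_erase.mp hx).1
            refine Finset.mem_filter.mpr ⟨hpoolmono x hxpool (Or.inl hxne), ?_⟩
            exact pw_lt_of_ne hW hw hm₀M (mem_pool_iff.mp hxpool).1 (Ne.symm hxne)
              (hmin x hxpool)
          have := Finset.card_le_card hsub2
          have h3 := Finset.card_erase_of_mem hm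
          omega
      · -- an old rejection
        have hIH := IH m₀ w₀ hpold hacc₀
        by_cases hww : w₀ = w
        · subst hww
          by_cases hmX : pw w₀ (some m₀) < pw w₀ (some m)
          · -- the newly rejected proposer was a witness
            rcases hcond with hbad | ⟨hover, hmin⟩
            · omega
            · have hall : ∀ x ∈ pool M W pm qa R w₀, pw w₀ (some m₀) < pw w₀ (some x) := by
                intro x hx
                exact lt_of_lt_of_le hmX (hmin x hx)
              have hXfull : (pool M W pm qa R w₀).filter
                  (fun x => pw w₀ (some m₀) < pw w₀ (some x)) = pool M W pm qa R w₀ := by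
                rw [Finset.filter_eq_self]
                exact hall
              have hsub2 : (pool M W pm qa R w₀).erase m ⊆
                  (pool M W pm qa (insert (m, w₀) R) w₀).filter
                    fun x => pw w₀ (some m₀) < pw w₀ (some x) := by
                intro x hx
                have hxpool := Finset.mem_of_mem_erase hx
                have hxne := (Finset.mem_erase.mp hx).1
                exact Finset.mem_filter.mpr
                  ⟨hpoolmono x hxpool (Or.inl hxne), hall x hxpool⟩
              have h1 := Finset.card_le_card hsub2
              have h2 := Finset.card_erase_of_mem hm
              have h3 : qwa w₀ < (pool M W pm qa R w₀).card := hover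
              omega
          · -- the newly rejected proposer was not a witness
            have hsub2 : (pool M W pm qa R w₀).filter
                  (fun x => pw w₀ (some m₀) < pw w₀ (some x)) ⊆
                (pool M W pm qa (insert (m, w₀) R) w₀).filter
                  fun x => pw w₀ (some m₀) < pw w₀ (some x) := by
              intro x hx
              rcases Finset.mem_filter.mp hx with ⟨hxpool, hxlt⟩
              have hxne : x ≠ m := by
                rintro rfl
                exact hmX hxlt
              exact Finset.mem_filter.mpr ⟨hpoolmono x hxpool (Or.inl hxne), hxlt⟩
            exact le_trans hIH (Finset.card_le_card hsub2)
        · have hsub2 : (pool M W pm qa R w₀).filter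
                (fun x => pw w₀ (some m₀) < pw w₀ (some x)) ⊆
              (pool M W pm qa (insert (m, w) R) w₀).filter
                fun x => pw w₀ (some m₀) < pw w₀ (some x) := by
            intro x hx
            rcases Finset.mem_filter.mp hx with ⟨hxpool, hxlt⟩
            exact Finset.mem_filter.mpr ⟨hpoolmono x hxpool (Or.inr hww), hxlt⟩
          exact le_trans hIH (Finset.card_le_card hsub2)

/-- Termination : a final state exists. -/
lemma exists_final (qa : α → ℕ) (qwa : β → ℕ) : ∃ R, IsFinal M W pm pw qa qwa R := by
  classical
  set S := (M ×ˢ W).powerset.filter (fun R => Reach M W pm pw qa qwa R) with hS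
  have hne : S.Nonempty := ⟨∅, Finset.mem_filter.mpr ⟨Finset.empty_mem_powerset _, Reach.base⟩⟩
  obtain ⟨R, hRS, hmax⟩ := Finset.exists_max_image S Finset.card hne
  rcases Finset.mem_filter.mp hRS with ⟨hRpow, hRreach⟩
  refine ⟨R, hRreach, ?_⟩
  by_contra hc
  push_neg at hc
  obtain ⟨w, hw, hviol⟩ := hc
  -- from the violation produce a possible step
  have hstep : ∃ m, m ∈ pool M W pm qa R w ∧
      (pw w (some m) < pw w none ∨
        (qwa w < (pool M W pm qa R w).card ∧
          ∀ m' ∈ pool M W pm qa R w, pw w (some m) ≤ pw w (some m'))) := by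
    by_cases hbad : ∃ m ∈ pool M W pm qa R w, pw w (some m) < pw w none
    · obtain ⟨m, hmp, hmb⟩ := hbad
      exact ⟨m, hmp, Or.inl hmb⟩
    · push_neg at hbad
      have hover : qwa w < (pool M W pm qa R w).card := by
        have := hviol hbad
        omega
      have hpne : (pool M W pm qa R w).Nonempty := Finset.card_pos.mp (by omega)
      obtain ⟨m, hmp, hmin⟩ := Finset.exists_min_image _ (fun x => pw w (some x)) hpne
      exact ⟨m, hmp, Or.inr ⟨hover, hmin⟩⟩
  obtain ⟨m, hmp, hcond⟩ := hstep
  have hnew : (m, w) ∉ R :=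
    not_rejected_of_mem_avail (tset_subset_avail (mem_pool_iff.mp hmp).2)
  have hreach' : Reach M W pm pw qa qwa (insert (m, w) R) :=
    Reach.step R w m hRreach hw hmp hcond
  have hmem' : insert (m, w) R ∈ S := Finset.mem_filter.mpr
    ⟨Finset.mem_powerset.mpr (Finset.insert_subset
      (Finset.mem_product.mpr ⟨(mem_pool_iff.mp hmp).1, hw⟩) (Finset.mem_powerset.mp hRpow)),
     hreach'⟩
  have := hmax _ hmem'
  rw [Finset.card_insert_of_notMem hnew] at this
  omega

lemma mem_gmatch_iff {qa : α → ℕ} {R : Finset (α × β)} {m : α} {w : β} :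
    (m, w) ∈ gmatch M W pm qa R ↔ m ∈ M ∧ w ∈ tset W pm qa R m := by
  constructor
  · intro h
    rcases Finset.mem_filter.mp h with ⟨hprod, ht⟩
    exact ⟨(Finset.mem_product.mp hprod).1, ht⟩
  · rintro ⟨hm, ht⟩
    exact Finset.mem_filter.mpr
      ⟨Finset.mem_product.mpr ⟨hm, avail_subset_W (tset_subset_avail ht)⟩, ht⟩

lemma ptnrsM_gmatch {qa : α → ℕ} {R : Finset (α × β)} {m : α} (hm : m ∈ M) :
    ptnrsM (gmatch M W pm qa R) m = tset W pm qa R m := by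
  ext w
  rw [mem_ptnrsM, mem_gmatch_iff]
  exact ⟨fun h => h.2, fun h => ⟨hm, h⟩⟩

lemma ptnrsW_gmatch {qa : α → ℕ} {R : Finset (α × β)} {w : β} :
    ptnrsW (gmatch M W pm qa R) w = pool M W pm qa R w := by
  ext m
  rw [mem_ptnrsW, mem_gmatch_iff, mem_pool_iff]

lemma pw_none_lt {w : β} (hW : ∀ w ∈ W, StrictPref (pw w) M) (hw : w ∈ W) {m : α}
    (hm : m ∈ M) (h : ¬ pw w (some m) < pw w none) : pw w none < pw w (some m) := by
  rcases lt_or_eq_of_le (not_lt.mp h) with h' | h'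
  · exact h'
  · exfalso
    have h1 : (none : Option α) ∈ insert none (Option.some '' (M : Set α)) :=
      Set.mem_insert _ _
    have h2 : (some m : Option α) ∈ insert none (Option.some '' (M : Set α)) :=
      Set.mem_insert_of_mem _ ⟨m, Finset.mem_coe.mpr hm, rfl⟩
    have := hW w hw h1 h2 h'
    simp at this

lemma gmatch_valid {qa : α → ℕ} {qwa : β → ℕ} {R : Finset (α × β)}
    (hM : ∀ m ∈ M, StrictPref (pm m) W)
    (hfin : IsFinal M W pm pw qa qwa R) : ValidQ M W qa qwa (gmatch M W pm qa R) := by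
  refine ⟨fun p hp => Finset.mem_product.mp ((Finset.filter_subset _ _) hp), fun m => ?_,
    fun w => ?_⟩
  · by_cases hm : m ∈ M
    · rw [ptnrsM_gmatch hm, card_tset (hM m hm)]
      omega
    · have : ptnrsM (gmatch M W pm qa R) m = ∅ := by
        ext w
        rw [mem_ptnrsM, mem_gmatch_iff]
        simp [hm]
      rw [this]
      simp
  · rw [ptnrsW_gmatch]
    by_cases hw : w ∈ W
    · exact (hfin.2 w hw).2
    · have : pool M W pm qa R w = ∅ := by
        ext m
        rw [mem_pool_iff]
        simp only [Finset.notMem_empty, iff_false, not_and]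
        intro _ ht
        exact hw (avail_subset_W (tset_subset_avail ht))
      rw [this]
      simp

lemma gmatch_indRat {qa : α → ℕ} {qwa : β → ℕ} {R : Finset (α × β)}
    (hW : ∀ w ∈ W, StrictPref (pw w) M)
    (hfin : IsFinal M W pm pw qa qwa R) : IndRatQ pm pw (gmatch M W pm qa R) := by
  rintro ⟨m, w⟩ hp
  rcases mem_gmatch_iff.mp hp with ⟨hm, ht⟩
  have hw : w ∈ W := avail_subset_W (tset_subset_avail ht)
  refine ⟨acc_of_mem_avail (tset_subset_avail ht), ?_⟩
  have hmpool : m ∈ pool M W pm qa R w := mem_pool_iff.mpr ⟨hm, ht⟩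
  exact pw_none_lt hW hw hm ((hfin.2 w hw).1 m hmpool)

lemma gmatch_stable {qa : α → ℕ} {qwa : β → ℕ} {R : Finset (α × β)}
    (hM : ∀ m ∈ M, StrictPref (pm m) W) (hW : ∀ w ∈ W, StrictPref (pw w) M)
    (hfin : IsFinal M W pm pw qa qwa R) : StableQ M W pm pw qa qwa (gmatch M W pm qa R) := by
  refine ⟨gmatch_indRat hW hfin, ?_⟩
  rintro m hm w hw ⟨hnot, hpm, hpw⟩
  have hwt : w ∉ tset W pm qa R m := fun ht => hnot (mem_gmatch_iff.mpr ⟨hm, ht⟩)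
  have haccw : pm m none < pm m (some w) := by
    rcases hpm with ⟨y, hy, hlt⟩ | ⟨_, hacc⟩
    · rw [ptnrsM_gmatch hm] at hy
      exact lt_trans (acc_of_mem_avail (tset_subset_avail hy)) hlt
    · exact hacc
  by_cases hR : (m, w) ∈ R
  · -- m was rejected by w
    by_cases haccm : pw w none < pw w (some m)
    · have hfull := reach_full hW hfin.1 m w hR haccm
      have hle := (hfin.2 w hw).2
      have hsubf : (pool M W pm qa R w).filter (fun x => pw w (some m) < pw w (some x)) ⊆
          pool M W pm qa R w := Finset.filter_subset _ _
      have heq := Finset.eq_of_subset_of_card_le hsubf (by omega)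
      have hall : ∀ x ∈ pool M W pm qa R w, pw w (some m) < pw w (some x) := by
        intro x hx
        rw [← heq] at hx
        exact (Finset.mem_filter.mp hx).2
      rcases hpw with ⟨y, hy, hlt⟩ | ⟨hcard, _⟩
      · rw [ptnrsW_gmatch] at hy
        exact absurd (hall y hy) (by omega)
      · rw [ptnrsW_gmatch] at hcard
        have := Finset.card_le_card hsubf
        omega
    · -- m unacceptable to w
      rcases hpw with ⟨y, hy, hlt⟩ | ⟨_, hacc⟩
      · rw [ptnrsW_gmatch] at hy
        have h1 := (hfin.2 w hw).1 y hy
        omega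
      · exact haccm hacc
  · -- m never proposed to w : w would be in his proposal set
    have hav : w ∈ avail W pm R m := mem_avail_iff.mpr ⟨hw, haccw, hR⟩
    obtain ⟨hcard, hall⟩ := tset_full_of_not_mem (hM m hm) hav hwt
    rcases hpm with ⟨y, hy, hlt⟩ | ⟨hc, _⟩
    · rw [ptnrsM_gmatch hm] at hy
      exact absurd (hall y hy) (by omega)
    · rw [ptnrsM_gmatch hm, hcard] at hc
      omega

/-- Proposer-side spot comparison with the output of the algorithm. -/
lemma final_spotA {qa qb : α → ℕ} {qwb : β → ℕ} {ν R : Finset (α × β)}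
    (hM : ∀ m ∈ M, StrictPref (pm m) W)
    (hIR : IndRatQ pm pw ν) (hval : ValidQ M W qb qwb ν) (hdisj : ∀ p ∈ R, p ∉ ν)
    {m : α} (hm : m ∈ M) {k : ℕ} (hk : k < qa m) :
    pm m (spot (pm m) (qb m) (ptnrsM ν m) k) ≤
      pm m (spot (pm m) (qa m) (ptnrsM (gmatch M W pm qa R) m) k) := by
  rw [ptnrsM_gmatch hm]
  show _ ≤ pm m (spot (pm m) (qa m) ((avail W pm R m).filter fun w =>
    ((avail W pm R m).filter fun y => pm m (some w) < pm m (some y)).card < qa m) k)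
  apply spotA
  · intro y hy z hz hyz
    have h1 : (some y : Option β) ∈ insert none (Option.some '' (W : Set β)) :=
      Set.mem_insert_of_mem _ ⟨y, Finset.mem_coe.mpr (avail_subset_W hy), rfl⟩
    have h2 : (some z : Option β) ∈ insert none (Option.some '' (W : Set β)) :=
      Set.mem_insert_of_mem _ ⟨z, Finset.mem_coe.mpr (avail_subset_W hz), rfl⟩
    simpa using hM m hm h1 h2 hyz
  · exact fun y hy => acc_of_mem_avail hy
  · exact partners_subset_avail hIR hval hdisj
  · exact hk

/-- Receiver-side spot comparison with the output of the algorithm. -/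
lemma final_spotB {qa qb : α → ℕ} {qwa qwb : β → ℕ} {ν R : Finset (α × β)}
    (hM : ∀ m ∈ M, StrictPref (pm m) W) (hW : ∀ w ∈ W, StrictPref (pw w) M)
    (hfin : IsFinal M W pm pw qa qwa R) (hq : ∀ m ∈ M, qa m ≤ qb m)
    (hval : ValidQ M W qb qwb ν) (hstab : StableQ M W pm pw qb qwb ν)
    (hdisj : ∀ p ∈ R, p ∉ ν)
    {w : β} (hw : w ∈ W) {k : ℕ} (hk : k < qwb w) :
    pw w (spot (pw w) (qwa w) (ptnrsW (gmatch M W pm qa R) w) k) ≤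
      pw w (spot (pw w) (qwb w) (ptnrsW ν w) k) := by
  rw [ptnrsW_gmatch]
  apply spotB
  · exact hval.2.2 w
  · exact hk
  · intro x hx
    exact pw_none_lt hW hw (mem_pool_iff.mp hx).1 ((hfin.2 w hw).1 x hx)
  · intro x hx
    exact (hstab.1 (x, w) (mem_ptnrsW.mp hx)).2
  · intro x hxpool hxnot
    have hxM : x ∈ M := (mem_pool_iff.mp hxpool).1
    have hxν : (x, w) ∉ ν := fun hc => hxnot (mem_ptnrsW.mpr hc)
    have hPO : PrefOver (pm x) (qb x) (ptnrsM ν x) w :=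
      prefOver_of_tset hM hxM (hq x hxM) hstab.1 hval hdisj (mem_pool_iff.mp hxpool).2 hxν
    have hnoblock := hstab.2 x hxM w hw
    have hnPO : ¬ PrefOver (pw w) (qwb w) (ptnrsW ν w) x := by
      intro hc
      exact hnoblock ⟨hxν, hPO, hc⟩
    rw [PrefOver] at hnPO
    push_neg at hnPO
    have haccx : pw w none < pw w (some x) :=
      pw_none_lt hW hw hxM ((hfin.2 w hw).1 x hxpool)
    have hcard : (ptnrsW ν w).card = qwb w := by
      have h1 := hval.2.2 w
      by_contra hc
      have h2 := hnPO.2 (by omega)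
      omega
    refine ⟨hcard, fun y hy => ?_⟩
    have hyM : y ∈ M := (hval.1 (y, w) (mem_ptnrsW.mp hy)).1
    have hyx : x ≠ y := by
      rintro rfl
      exact hxnot hy
    exact pw_lt_of_ne hW hw hxM hyM hyx (hnPO.1 y hy)

/-- The algorithm's output is the proposer-optimal stable matching. -/
lemma gmatch_manOpt {qa : α → ℕ} {qwa : β → ℕ} {R : Finset (α × β)}
    (hM : ∀ m ∈ M, StrictPref (pm m) W) (hW : ∀ w ∈ W, StrictPref (pw w) M)
    (hfin : IsFinal M W pm pw qa qwa R) : ManOptQ M W pm pw qa qwa (gmatch M W pm qa R) := by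
  refine ⟨gmatch_valid hM hfin, gmatch_stable hM hW hfin, ?_⟩
  intro ν hv hs m hm k hk
  exact final_spotA hM hs.1 hv
    (reach_disjoint hM hW (fun m _ => le_refl _) (fun w _ => le_refl _) hv hs hfin.1) hm hk

lemma some_mem_slist {γ : Type*} {f : Option γ → ℕ} {q : ℕ} {P : Finset γ} {y : γ} :
    some y ∈ slist f q P ↔ y ∈ P := by
  rw [(slist_perm f q P).mem_iff, List.mem_append]
  constructor
  · rintro (h | h)
    · rcases List.mem_map.mp h with ⟨z, hz, hzy⟩
      simp only [Option.some.injEq] at hzy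
      subst hzy
      exact Finset.mem_toList.mp hz
    · exact absurd (List.eq_of_mem_replicate h) (by simp)
  · intro h
    exact Or.inl (List.mem_map.mpr ⟨y, Finset.mem_toList.mpr h, rfl⟩)

/-- Spot-wise optimality determines the matching uniquely. -/
lemma manOpt_eq {qa : α → ℕ} {qwa : β → ℕ} {μ μ' : Finset (α × β)}
    (hM : ∀ m ∈ M, StrictPref (pm m) W)
    (h1 : ManOptQ M W pm pw qa qwa μ) (h2 : ManOptQ M W pm pw qa qwa μ') : μ = μ' := by
  classical
  have hsets : ∀ m ∈ M, ptnrsM μ m = ptnrsM μ' m := by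
    intro m hm
    have hcard : (ptnrsM μ m).card ≤ qa m := h1.1.2.1 m
    have hcard' : (ptnrsM μ' m).card ≤ qa m := h2.1.2.1 m
    set L := slist (pm m) (qa m) (ptnrsM μ m) with hL
    set L' := slist (pm m) (qa m) (ptnrsM μ' m) with hL'
    have hlen : L.length = qa m := length_slist_of_le _ hcard
    have hlen' : L'.length = qa m := length_slist_of_le _ hcard'
    have hmemW : ∀ x ∈ L, x ∈ insert none (Option.some '' (W : Set β)) := by
      intro x hx
      rcases mem_slist hx with rfl | ⟨y, hy, rfl⟩
      · exact Set.mem_insert _ _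
      · exact Set.mem_insert_of_mem _
          ⟨y, Finset.mem_coe.mpr (h1.1.1 (m, y) (mem_ptnrsM.mp hy)).2, rfl⟩
    have hmemW' : ∀ x ∈ L', x ∈ insert none (Option.some '' (W : Set β)) := by
      intro x hx
      rcases mem_slist hx with rfl | ⟨y, hy, rfl⟩
      · exact Set.mem_insert _ _
      · exact Set.mem_insert_of_mem _
          ⟨y, Finset.mem_coe.mpr (h2.1.1 (m, y) (mem_ptnrsM.mp hy)).2, rfl⟩
    have hLeq : L = L' := by
      apply List.ext_getElem (by omega)
      intro n hn1 hn2
      have hnq : n < qa m := by omega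
      have hspoteq : pm m (spot (pm m) (qa m) (ptnrsM μ m) n) =
          pm m (spot (pm m) (qa m) (ptnrsM μ' m) n) :=
        le_antisymm (h2.2.2 μ h1.1 h1.2.1 m hm n hnq) (h1.2.2 μ' h2.1 h2.2.1 m hm n hnq)
      rw [spot_eq_slist, spot_eq_slist, ← hL, ← hL',
        List.getElem?_eq_getElem hn1, List.getElem?_eq_getElem hn2] at hspoteq
      simp only [Option.getD_some] at hspoteq
      exact hM m hm (hmemW _ (List.getElem_mem hn1)) (hmemW' _ (List.getElem_mem hn2)) hspoteq
    ext y
    rw [← some_mem_slist (f := pm m) (q := qa m), ← some_mem_slist (f := pm m) (q := qa m),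
      ← hL, ← hL', hLeq]
  apply Finset.ext
  rintro ⟨m, w⟩
  by_cases hm : m ∈ M
  · rw [← mem_ptnrsM, ← mem_ptnrsM, hsets m hm]
  · constructor
    · intro h
      exact absurd (h1.1.1 (m, w) h).1 hm
    · intro h
      exact absurd (h2.1.1 (m, w) h).1 hm

end Market

section Swap

variable {α β : Type*}

noncomputable def swapF (ν : Finset (α × β)) : Finset (β × α) := ν.image Prod.swap

lemma mem_swapF {ν : Finset (α × β)} {m : α} {w : β} : (w, m) ∈ swapF ν ↔ (m, w) ∈ ν := by
  constructor
  · intro h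
    rcases Finset.mem_image.mp h with ⟨⟨a, b⟩, hp, heq⟩
    simp only [Prod.swap_prod_mk, Prod.mk.injEq] at heq
    obtain ⟨rfl, rfl⟩ := heq
    exact hp
  · intro h
    exact Finset.mem_image.mpr ⟨(m, w), h, rfl⟩

lemma swapF_swapF (ν : Finset (α × β)) : swapF (swapF ν) = ν := by
  apply Finset.ext
  rintro ⟨m, w⟩
  rw [mem_swapF, mem_swapF]

lemma ptnrsM_swapF (ν : Finset (α × β)) (w : β) : ptnrsM (swapF ν) w = ptnrsW ν w := by
  ext m
  rw [mem_ptnrsM, mem_swapF, mem_ptnrsW]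

lemma ptnrsW_swapF (ν : Finset (α × β)) (m : α) : ptnrsW (swapF ν) m = ptnrsM ν m := by
  ext w
  rw [mem_ptnrsW, mem_swapF, mem_ptnrsM]

lemma validQ_swapF {M : Finset α} {W : Finset β} {qM : α → ℕ} {qW : β → ℕ}
    {ν : Finset (α × β)} (h : ValidQ M W qM qW ν) : ValidQ W M qW qM (swapF ν) := by
  refine ⟨?_, fun w => ?_, fun m => ?_⟩
  · rintro ⟨w, m⟩ hp
    have := h.1 (m, w) (mem_swapF.mp hp)
    exact ⟨this.2, this.1⟩
  · rw [ptnrsM_swapF]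
    exact h.2.2 w
  · rw [ptnrsW_swapF]
    exact h.2.1 m

lemma indRatQ_swapF {pm : α → Option β → ℕ} {pw : β → Option α → ℕ} {ν : Finset (α × β)}
    (h : IndRatQ pm pw ν) : IndRatQ pw pm (swapF ν) := by
  rintro ⟨w, m⟩ hp
  have := h (m, w) (mem_swapF.mp hp)
  exact ⟨this.2, this.1⟩

lemma stableQ_swapF {M : Finset α} {W : Finset β} {pm : α → Option β → ℕ}
    {pw : β → Option α → ℕ} {qM : α → ℕ} {qW : β → ℕ} {ν : Finset (α × β)}
    (h : StableQ M W pm pw qM qW ν) : StableQ W M pw pm qW qM (swapF ν) := by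
  refine ⟨indRatQ_swapF h.1, ?_⟩
  rintro w hw m hm ⟨hnot, hpw, hpm⟩
  rw [ptnrsM_swapF] at hpw
  rw [ptnrsW_swapF] at hpm
  exact h.2 m hm w hw ⟨fun hc => hnot (mem_swapF.mpr hc), hpm, hpw⟩

lemma womanOpt_swapF {M : Finset α} {W : Finset β} {pm : α → Option β → ℕ}
    {pw : β → Option α → ℕ} {qM : α → ℕ} {qW : β → ℕ} {ν : Finset (α × β)}
    (h : WomanOptQ M W pm pw qM qW ν) : ManOptQ W M pw pm qW qM (swapF ν) := by
  obtain ⟨hv, hs, hopt⟩ := h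
  refine ⟨validQ_swapF hv, stableQ_swapF hs, ?_⟩
  intro ν' hv' hs' w hw k hk
  have hv'' : ValidQ M W qM qW (swapF ν') := validQ_swapF hv'
  have hs'' : StableQ M W pm pw qM qW (swapF ν') := stableQ_swapF hs'
  have h1 := hopt (swapF ν') hv'' hs'' w hw k hk
  rw [ptnrsM_swapF]
  have h2 : ptnrsM ν' w = ptnrsW (swapF ν') w := by
    conv_lhs => rw [← swapF_swapF ν']
    rw [ptnrsM_swapF]
  rw [h2]
  exact h1

end Swap


/-- Comparative statics of the extended Gale–Shapley algorithm with
quotas: lowering men's quotas (`q1M ≤ qM`) makes every man weakly better off spot-wise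
and every woman weakly worse off; lowering women's quotas (`q2W ≤ qW`) makes every man
weakly worse off and every woman weakly better off. Here `μ`, `μ₁`, `μ₂` are the
σ-optimal stable matchings under quotas `Q`, `Q₁`, `Q₂` respectively, for the same
fixed proposing side σ. -/
theorem quota_comparative_statics
    (M : Finset α) (W : Finset β)
    (prefM : α → Option β → ℕ) (prefW : β → Option α → ℕ)
    (hM : ∀ m ∈ M, StrictPref (prefM m) W) (hW : ∀ w ∈ W, StrictPref (prefW w) M)
    (qM q1M : α → ℕ) (qW q2W : β → ℕ)
    (hq1 : ∀ m ∈ M, q1M m ≤ qM m) (hq2 : ∀ w ∈ W, q2W w ≤ qW w)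
    (μ μ₁ μ₂ : Finset (α × β))
    (hopt :
      (ManOptQ M W prefM prefW qM qW μ ∧ ManOptQ M W prefM prefW q1M qW μ₁ ∧
        ManOptQ M W prefM prefW qM q2W μ₂) ∨
      (WomanOptQ M W prefM prefW qM qW μ ∧ WomanOptQ M W prefM prefW q1M qW μ₁ ∧
        WomanOptQ M W prefM prefW qM q2W μ₂)) :
    (∀ m ∈ M, ∀ k, k < q1M m →
        prefM m (spot (prefM m) (qM m) (ptnrsM μ m) k) ≤
          prefM m (spot (prefM m) (q1M m) (ptnrsM μ₁ m) k)) ∧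
    (∀ w ∈ W, ∀ k, k < qW w →
        prefW w (spot (prefW w) (qW w) (ptnrsW μ₁ w) k) ≤
          prefW w (spot (prefW w) (qW w) (ptnrsW μ w) k)) ∧
    (∀ m ∈ M, ∀ k, k < qM m →
        prefM m (spot (prefM m) (qM m) (ptnrsM μ₂ m) k) ≤
          prefM m (spot (prefM m) (qM m) (ptnrsM μ m) k)) ∧
    (∀ w ∈ W, ∀ k, k < q2W w →
        prefW w (spot (prefW w) (qW w) (ptnrsW μ w) k) ≤
          prefW w (spot (prefW w) (q2W w) (ptnrsW μ₂ w) k)) := by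
  rcases hopt with ⟨hμ, hμ1, hμ2⟩ | ⟨hμ, hμ1, hμ2⟩
  · -- men propose
    obtain ⟨R, hfin⟩ := exists_final (M := M) (W := W) (pm := prefM) (pw := prefW) qM qW
    obtain ⟨R1, hfin1⟩ := exists_final (M := M) (W := W) (pm := prefM) (pw := prefW) q1M qW
    obtain ⟨R2, hfin2⟩ := exists_final (M := M) (W := W) (pm := prefM) (pw := prefW) qM q2W
    have he : μ = gmatch M W prefM qM R := manOpt_eq hM hμ (gmatch_manOpt hM hW hfin)
    have he1 : μ₁ = gmatch M W prefM q1M R1 := manOpt_eq hM hμ1 (gmatch_manOpt hM hW hfin1)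
    have he2 : μ₂ = gmatch M W prefM qM R2 := manOpt_eq hM hμ2 (gmatch_manOpt hM hW hfin2)
    subst he he1 he2
    have hvg := gmatch_valid hM hfin
    have hsg := gmatch_stable hM hW hfin
    have hvg2 := gmatch_valid hM hfin2
    have hsg2 := gmatch_stable hM hW hfin2
    refine ⟨?_, ?_, ?_, ?_⟩
    · intro m hm k hk
      exact final_spotA hM hsg.1 hvg
        (reach_disjoint hM hW hq1 (fun w _ => le_refl _) hvg hsg hfin1.1) hm hk
    · intro w hw k hk
      exact final_spotB hM hW hfin1 hq1 hvg hsg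
        (reach_disjoint hM hW hq1 (fun w _ => le_refl _) hvg hsg hfin1.1) hw hk
    · intro m hm k hk
      exact final_spotA hM hsg2.1 hvg2
        (reach_disjoint hM hW (fun m _ => le_refl _) hq2 hvg2 hsg2 hfin.1) hm hk
    · intro w hw k hk
      exact final_spotB hM hW hfin (fun m _ => le_refl _) hvg2 hsg2
        (reach_disjoint hM hW (fun m _ => le_refl _) hq2 hvg2 hsg2 hfin.1) hw hk
  · -- women propose : work in the swapped market
    obtain ⟨R, hfin⟩ := exists_final (M := W) (W := M) (pm := prefW) (pw := prefM) qW qM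
    obtain ⟨R1, hfin1⟩ := exists_final (M := W) (W := M) (pm := prefW) (pw := prefM) qW q1M
    obtain ⟨R2, hfin2⟩ := exists_final (M := W) (W := M) (pm := prefW) (pw := prefM) q2W qM
    have he : swapF μ = gmatch W M prefW qW R :=
      manOpt_eq hW (womanOpt_swapF hμ) (gmatch_manOpt hW hM hfin)
    have he1 : swapF μ₁ = gmatch W M prefW qW R1 :=
      manOpt_eq hW (womanOpt_swapF hμ1) (gmatch_manOpt hW hM hfin1)
    have he2 : swapF μ₂ = gmatch W M prefW q2W R2 :=
      manOpt_eq hW (womanOpt_swapF hμ2) (gmatch_manOpt hW hM hfin2)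
    have hμe : μ = swapF (gmatch W M prefW qW R) := by rw [← he, swapF_swapF]
    have hμ1e : μ₁ = swapF (gmatch W M prefW qW R1) := by rw [← he1, swapF_swapF]
    have hμ2e : μ₂ = swapF (gmatch W M prefW q2W R2) := by rw [← he2, swapF_swapF]
    subst hμe hμ1e hμ2e
    have hvg := gmatch_valid hW hfin
    have hsg := gmatch_stable hW hM hfin
    have hvg1 := gmatch_valid hW hfin1
    have hsg1 := gmatch_stable hW hM hfin1
    refine ⟨?_, ?_, ?_, ?_⟩
    · intro m hm k hk
      rw [ptnrsM_swapF, ptnrsM_swapF]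
      exact final_spotB hW hM hfin (fun w hw => le_refl _) hvg1 hsg1
        (reach_disjoint hW hM (fun w _ => le_refl _) hq1 hvg1 hsg1 hfin.1) hm hk
    · intro w hw k hk
      rw [ptnrsW_swapF, ptnrsW_swapF]
      exact final_spotA hW hsg1.1 hvg1
        (reach_disjoint hW hM (fun w _ => le_refl _) hq1 hvg1 hsg1 hfin.1) hw hk
    · intro m hm k hk
      rw [ptnrsM_swapF, ptnrsM_swapF]
      exact final_spotB hW hM hfin2 hq2 hvg hsg
        (reach_disjoint hW hM hq2 (fun m _ => le_refl _) hvg hsg hfin2.1) hm hk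
    · intro w hw k hk
      rw [ptnrsW_swapF, ptnrsW_swapF]
      exact final_spotA hW hsg.1 hvg
        (reach_disjoint hW hM hq2 (fun m _ => le_refl _) hvg hsg hfin2.1) hw hk


end Stmt13
end

section
/- In the PhD algorithm with quotas on a three-sided PhD market with quotas and strict preferences, a student's matches on the advisor–student market cannot decrease over iterations: for every iteration τ ≥ 2 and student s with advisor-market capacity q_s^(τ) at iteration τ, μ_AS^(τ)(s)_k ≥_s μ_AS^(τ−1)(s)_k for all k = 1,…,q_s^(τ). In particular, the number of advisors matched to s at iteration τ is at least min(q_s^(τ), number of advisors matched to s at iteration τ−1). -/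
open scoped Classical

namespace Stmt14

/-- Strict preferences over partners in `W` plus staying single (`none`), encoded by a
rank function injective on the relevant alternatives; higher rank = more preferred. -/
def StrictPref {β : Type*} (pref : Option β → ℕ) (W : Finset β) : Prop :=
  Set.InjOn pref (insert none (Option.some '' (W : Set β)))

variable {α β : Type*}

/-- The set of partners of man `m` in the many-to-many matching `ν`. -/
noncomputable def ptnrsM (ν : Finset (α × β)) (m : α) : Finset β :=
  (ν.filter fun p => p.1 = m).image Prod.snd

/-- The set of partners of woman `w` in the many-to-many matching `ν`. -/
noncomputable def ptnrsW (ν : Finset (α × β)) (w : β) : Finset α :=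
  (ν.filter fun p => p.2 = w).image Prod.fst

/-- A valid many-to-many matching with quotas `qM`, `qW`: all pairs lie in `M × W`,
every person is matched at most their quota many times, and (being a set of pairs)
no man–woman pair is matched more than once. -/
def ValidQ (M : Finset α) (W : Finset β) (qM : α → ℕ) (qW : β → ℕ)
    (ν : Finset (α × β)) : Prop :=
  (∀ p ∈ ν, p.1 ∈ M ∧ p.2 ∈ W) ∧
  (∀ m, (ptnrsM ν m).card ≤ qM m) ∧ (∀ w, (ptnrsW ν w).card ≤ qW w)

/-- `x` is preferred to the set `P` of current partners padded with self-matches up to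
the quota `q`: `x` beats some current partner, or there is a free spot and `x` is
acceptable. -/
def PrefOver {X : Type*} (pref : Option X → ℕ) (q : ℕ) (P : Finset X) (x : X) : Prop :=
  (∃ y ∈ P, pref (some y) < pref (some x)) ∨ (P.card < q ∧ pref none < pref (some x))

/-- Individual rationality: no spot is filled by an unacceptable partner. -/
def IndRatQ (prefM : α → Option β → ℕ) (prefW : β → Option α → ℕ)
    (ν : Finset (α × β)) : Prop :=
  ∀ p ∈ ν, prefM p.1 none < prefM p.1 (some p.2) ∧ prefW p.2 none < prefW p.2 (some p.1)

/-- The (unmatched) pair `(m, w)` blocks `ν`. -/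
def BlocksQ (prefM : α → Option β → ℕ) (prefW : β → Option α → ℕ)
    (qM : α → ℕ) (qW : β → ℕ) (ν : Finset (α × β)) (m : α) (w : β) : Prop :=
  (m, w) ∉ ν ∧ PrefOver (prefM m) (qM m) (ptnrsM ν m) w ∧
    PrefOver (prefW w) (qW w) (ptnrsW ν w) m

/-- Stability of a many-to-many matching with quotas. -/
def StableQ (M : Finset α) (W : Finset β) (prefM : α → Option β → ℕ)
    (prefW : β → Option α → ℕ) (qM : α → ℕ) (qW : β → ℕ) (ν : Finset (α × β)) : Prop :=
  IndRatQ prefM prefW ν ∧ ∀ m ∈ M, ∀ w ∈ W, ¬ BlocksQ prefM prefW qM qW ν m w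

/-- The `k`-th best partner (0-indexed) of a person with preferences `pref` and quota
`q`, among the set `P` of actual partners padded with self-matches (`none`) up to the
quota: the list of partners is sorted from most to least preferred. -/
noncomputable def spot {X : Type*} (pref : Option X → ℕ) (q : ℕ) (P : Finset X) (k : ℕ) :
    Option X :=
  (((P.toList.map some ++ List.replicate (q - P.card) none).insertionSort
      fun x y => pref y ≤ pref x)[k]?).getD none

/-- The man-optimal stable matching with quotas (extended Gale–Shapley with men
proposing): every man's `k`-th best spot is at least as good as in any other stable
matching. -/
def ManOptQ (M : Finset α) (W : Finset β) (prefM : α → Option β → ℕ)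
    (prefW : β → Option α → ℕ) (qM : α → ℕ) (qW : β → ℕ) (ν : Finset (α × β)) : Prop :=
  ValidQ M W qM qW ν ∧ StableQ M W prefM prefW qM qW ν ∧
  ∀ ν' : Finset (α × β), ValidQ M W qM qW ν' → StableQ M W prefM prefW qM qW ν' →
    ∀ m ∈ M, ∀ k, k < qM m →
      prefM m (spot (prefM m) (qM m) (ptnrsM ν' m) k) ≤
        prefM m (spot (prefM m) (qM m) (ptnrsM ν m) k)

/-- The woman-optimal stable matching with quotas (extended Gale–Shapley with women
proposing). -/
def WomanOptQ (M : Finset α) (W : Finset β) (prefM : α → Option β → ℕ)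
    (prefW : β → Option α → ℕ) (qM : α → ℕ) (qW : β → ℕ) (ν : Finset (α × β)) : Prop :=
  ValidQ M W qM qW ν ∧ StableQ M W prefM prefW qM qW ν ∧
  ∀ ν' : Finset (α × β), ValidQ M W qM qW ν' → StableQ M W prefM prefW qM qW ν' →
    ∀ w ∈ W, ∀ k, k < qW w →
      prefW w (spot (prefW w) (qW w) (ptnrsW ν' w) k) ≤
        prefW w (spot (prefW w) (qW w) (ptnrsW ν w) k)


variable {σ γ : Type*}

/-! ### Auxiliary infrastructure -/

section Aux
variable {X : Type*}

/-- count of alternatives with rank at least `t` in the padded pool -/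
noncomputable def cnt (r : Option X → ℕ) (q : ℕ) (P : Finset X) (t : ℕ) : ℕ :=
  (P.filter fun x => t ≤ r (some x)).card + (if t ≤ r none then q - P.card else 0)

lemma toList_countP (P : Finset X) (p : X → Prop) [DecidablePred p] :
    P.toList.countP (fun x => decide (p x)) = (P.filter p).card := by
  classical
  have : P.toList.countP (fun x => decide (p x)) = Multiset.countP p P.val := by
    rw [← Finset.coe_toList P, Multiset.coe_countP]
  rw [this, Multiset.countP_eq_card_filter, Finset.card_def, Finset.filter_val]

section
variable (r : Option X → ℕ) {q k : ℕ} {P : Finset X}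

noncomputable def padded (r : Option X → ℕ) (q : ℕ) (P : Finset X) : List (Option X) :=
  (P.toList.map some ++ List.replicate (q - P.card) none).insertionSort
      fun x y => r y ≤ r x

lemma padded_length (hP : P.card ≤ q) : (padded r q P).length = q := by
  rw [padded, List.length_insertionSort, List.length_append, List.length_map,
    List.length_replicate, Finset.length_toList]
  omega

lemma padded_sorted : (padded r q P).Pairwise (fun x y => r y ≤ r x) := by
  haveI : Std.Total (α := Option X) (fun x y => r y ≤ r x) := ⟨fun a b => le_total (r b) (r a)⟩
  haveI : IsTrans (Option X) (fun x y => r y ≤ r x) :=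
    ⟨fun _ _ _ h1 h2 => le_trans h2 h1⟩
  exact List.pairwise_insertionSort _ _

lemma padded_perm : (padded r q P).Perm (P.toList.map some ++ List.replicate (q - P.card) none) :=
  List.perm_insertionSort _ _

lemma padded_countP (t : ℕ) :
    (padded r q P).countP (fun o => decide (t ≤ r o)) = cnt r q P t := by
  rw [(padded_perm r).countP_eq, List.countP_append, List.countP_map, List.countP_replicate,
    cnt]
  simp only [Function.comp_def]
  rw [toList_countP P (fun x => t ≤ r (some x))]
  by_cases h : t ≤ r none <;> simp [h]

lemma spot_eq_get (hP : P.card ≤ q) (hk : k < q) :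
    spot r q P k = (padded r q P)[k]'(by rw [padded_length r hP]; exact hk) := by
  have h : k < (padded r q P).length := by rw [padded_length r hP]; exact hk
  have : spot r q P k = ((padded r q P)[k]?).getD none := rfl
  rw [this, List.getElem?_eq_getElem h]
  rfl

lemma spot_ge_iff (hP : P.card ≤ q) (hk : k < q) (t : ℕ) :
    t ≤ r (spot r q P k) ↔ k + 1 ≤ cnt r q P t := by
  have hlen := padded_length r (P := P) hP
  have hkl : k < (padded r q P).length := by omega
  have hget := spot_eq_get r hP hk
  set L := padded r q P with hL
  have hmono : ∀ i j : Fin L.length, i ≤ j → r (L.get j) ≤ r (L.get i) := by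
    intro i j hij
    haveI : Std.Refl (α := Option X) (fun x y => r y ≤ r x) := ⟨fun a => le_refl _⟩
    exact (padded_sorted r).rel_get_of_le hij
  constructor
  · intro ht
    calc k + 1 = (L.take (k+1)).countP (fun o => decide (t ≤ r o)) := by
          rw [List.countP_eq_length.2]
          · rw [List.length_take]; omega
          · intro o ho
            rw [List.mem_take_iff_getElem] at ho
            obtain ⟨i, hi, hio⟩ := ho
            have hik : i ≤ k := by omega
            have := hmono ⟨i, by omega⟩ ⟨k, hkl⟩ hik
            simp only [List.get_eq_getElem] at this
            rw [hio] at this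
            simpa using le_trans (hget ▸ ht) this
      _ ≤ L.countP (fun o => decide (t ≤ r o)) := by
          conv_rhs => rw [← List.take_append_drop (k+1) L]
          rw [List.countP_append]; omega
      _ = cnt r q P t := padded_countP r t
  · intro hc
    by_contra ht
    push_neg at ht
    have hdz : (L.drop k).countP (fun o => decide (t ≤ r o)) = 0 := by
      rw [List.countP_eq_zero]
      intro o ho
      rw [List.mem_drop_iff_getElem] at ho
      obtain ⟨i, hi, hio⟩ := ho
      have := hmono ⟨k, hkl⟩ ⟨k + i, by omega⟩ (Fin.mk_le_mk.mpr (by omega))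
      simp only [List.get_eq_getElem] at this
      rw [hio] at this
      simp only [decide_eq_true_eq, not_le]
      have ht' := ht
      rw [hget] at ht'
      exact lt_of_le_of_lt this ht'
    have : L.countP (fun o => decide (t ≤ r o)) ≤ k := by
      conv_lhs => rw [← List.take_append_drop k L]
      rw [List.countP_append, hdz]
      have := List.countP_le_length (p := fun o => decide (t ≤ r o)) (l := L.take k)
      rw [List.length_take] at this
      omega
    rw [padded_countP r t] at this
    omega

lemma spot_mem_of_full (hP : P.card = q) (hk : k < q) :
    ∃ x ∈ P, spot r q P k = some x := by
  have hget := spot_eq_get r (le_of_eq hP) hk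
  have hkl : k < (padded r q P).length := by rw [padded_length r (le_of_eq hP)]; exact hk
  have hmem : (padded r q P)[k] ∈ padded r q P := List.getElem_mem _
  have := (padded_perm r (q := q) (P := P)).mem_iff.1 hmem
  rw [hP, Nat.sub_self, List.replicate_zero, List.append_nil, List.mem_map] at this
  obtain ⟨x, hx, hxe⟩ := this
  exact ⟨x, by simpa using hx, by rw [hget, ← hxe]⟩

lemma none_le_spot (hP : P.card ≤ q) (hk : k < q)
    (hacc : ∀ x ∈ P, r none < r (some x)) : r none ≤ r (spot r q P k) := by
  rw [spot_ge_iff r hP hk]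
  have : P.filter (fun x => r none ≤ r (some x)) = P :=
    Finset.filter_true_of_mem fun x hx => le_of_lt (hacc x hx)
  rw [cnt, this, if_pos le_rfl]
  omega

end

/-- the `k` best elements of `U` according to rank `r` -/
noncomputable def topk (r : Option X → ℕ) (k : ℕ) (U : Finset X) : Finset X :=
  ((U.toList.insertionSort fun x y => r (some y) ≤ r (some x)).take k).toFinset

section
variable (r : Option X → ℕ) (k : ℕ) (U : Finset X)

lemma topk_perm : (U.toList.insertionSort fun x y => r (some y) ≤ r (some x)).Perm
    U.toList := List.perm_insertionSort _ _

lemma topk_subset : topk r k U ⊆ U := by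
  intro x hx
  rw [topk, List.mem_toFinset] at hx
  have := List.mem_of_mem_take hx
  rw [(topk_perm r U).mem_iff, Finset.mem_toList] at this
  exact this

lemma topk_nodup : ((U.toList.insertionSort fun x y => r (some y) ≤ r (some x)).take k).Nodup :=
  (List.take_sublist _ _).nodup ((topk_perm r U).nodup_iff.2 (Finset.nodup_toList U))

lemma card_topk : (topk r k U).card = min k U.card := by
  rw [topk, List.toFinset_card_of_nodup (topk_nodup r k U), List.length_take,
    List.length_insertionSort, Finset.length_toList]

lemma topk_sep {x y : X} (hx : x ∈ U) (hx' : x ∉ topk r k U) (hy : y ∈ topk r k U) :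
    r (some x) ≤ r (some y) := by
  set L := U.toList.insertionSort fun x y => r (some y) ≤ r (some x) with hL
  have hsort : L.Pairwise fun x y => r (some y) ≤ r (some x) := by
    haveI : Std.Total (α := X) (fun x y => r (some y) ≤ r (some x)) := ⟨fun a b => le_total _ _⟩
    haveI : IsTrans X (fun x y => r (some y) ≤ r (some x)) :=
      ⟨fun _ _ _ h1 h2 => le_trans h2 h1⟩
    exact List.pairwise_insertionSort _ _
  have hxL : x ∈ L := by rw [(topk_perm r U).mem_iff, Finset.mem_toList]; exact hx
  have hxd : x ∈ L.drop k := by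
    rcases (List.mem_append.1 (by rwa [List.take_append_drop k L] : x ∈ L.take k ++ L.drop k))
      with h | h
    · exact absurd (List.mem_toFinset.2 h) hx'
    · exact h
  have hyt : y ∈ L.take k := List.mem_toFinset.1 hy
  have hpw : List.Pairwise (fun x y => r (some y) ≤ r (some x)) L := hsort
  rw [← List.take_append_drop k L, List.pairwise_append] at hpw
  exact hpw.2.2 y hyt x hxd

lemma topk_filter_card (t : ℕ) :
    min k (U.filter fun x => t ≤ r (some x)).card
      ≤ ((topk r k U).filter fun x => t ≤ r (some x)).card := by
  by_cases hU : U.card ≤ k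
  · have : topk r k U = U := Finset.eq_of_subset_of_card_le (topk_subset r k U)
      (by rw [card_topk]; omega)
    rw [this]
    exact min_le_right _ _
  · push_neg at hU
    have hck : (topk r k U).card = k := by rw [card_topk]; omega
    set F := U.filter fun x => t ≤ r (some x) with hF
    by_cases hFk : F.card < k
    · have hsub : F ⊆ topk r k U := by
        intro x hxF
        by_contra hx'
        have hle : (topk r k U).card ≤ ((topk r k U) \ F).card + F.card :=
          Finset.card_le_card_sdiff_add_card
        have hne : ((topk r k U) \ F).Nonempty := by
          rw [← Finset.card_pos]; omega
        obtain ⟨y, hy⟩ := hne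
        rw [Finset.mem_sdiff] at hy
        have hyF : ¬ t ≤ r (some y) := by
          intro hty
          exact hy.2 (Finset.mem_filter.2 ⟨topk_subset r k U hy.1, hty⟩)
        have hxU : x ∈ U := (Finset.mem_filter.1 hxF).1
        have hxt : t ≤ r (some x) := (Finset.mem_filter.1 hxF).2
        exact hyF (le_trans hxt (topk_sep r k U hxU hx' hy.1))
      have : F ⊆ (topk r k U).filter fun x => t ≤ r (some x) := by
        intro x hxF
        exact Finset.mem_filter.2 ⟨hsub hxF, (Finset.mem_filter.1 hxF).2⟩
      have h2 := Finset.card_le_card this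
      exact le_trans (min_le_right _ _) h2
    · push_neg at hFk
      have : (topk r k U).filter (fun x => t ≤ r (some x)) = topk r k U := by
        apply Finset.filter_true_of_mem
        intro y hy
        by_contra hyt
        have hsub : F ⊆ (topk r k U).erase y := by
          intro x hxF
          have hxU : x ∈ U := (Finset.mem_filter.1 hxF).1
          have hxt : t ≤ r (some x) := (Finset.mem_filter.1 hxF).2
          have hxtop : x ∈ topk r k U := by
            by_contra hx'
            exact hyt (le_trans hxt (topk_sep r k U hxU hx' hy))
          refine Finset.mem_erase.2 ⟨?_, hxtop⟩
          rintro rfl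
          exact hyt hxt
        have := Finset.card_le_card hsub
        rw [Finset.card_erase_of_mem hy, hck] at this
        have hk1 : 1 ≤ k := by rw [← hck]; exact Finset.card_pos.2 ⟨y, hy⟩
        omega
      rw [this, hck]
      exact min_le_left _ _

end

/-- comparison: the top-`q'` selection from a superset slotwise dominates -/
lemma cmp_spot (r : Option X → ℕ) {q q' k : ℕ} {P U : Finset X} (hPU : P ⊆ U)
    (hacc : ∀ x ∈ U, r none < r (some x)) (hP : P.card ≤ q) (hq : q' ≤ q) (hk : k < q') :
    r (spot r q P k) ≤ r (spot r q' (topk r q' U) k) := by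
  have htk : (topk r q' U).card ≤ q' := by
    rw [card_topk]; exact min_le_left _ _
  rw [spot_ge_iff r htk hk]
  have h1 : k + 1 ≤ cnt r q P (r (spot r q P k)) :=
    (spot_ge_iff r hP (lt_of_lt_of_le hk hq) _).1 le_rfl
  set t := r (spot r q P k) with hts
  by_cases hnone : t ≤ r none
  · have hfe : (topk r q' U).filter (fun x => t ≤ r (some x)) = topk r q' U :=
      Finset.filter_true_of_mem fun x hx =>
        le_trans hnone (le_of_lt (hacc x (topk_subset r q' U hx)))
    rw [cnt, hfe, if_pos hnone]
    omega
  · rw [cnt, if_neg hnone] at h1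
    have h2 : k + 1 ≤ (U.filter fun x => t ≤ r (some x)).card := by
      have := Finset.card_le_card (Finset.filter_subset_filter (fun x => t ≤ r (some x)) hPU)
      omega
    have h3 := topk_filter_card r q' U t
    rw [cnt]
    have : k + 1 ≤ min q' (U.filter fun x => t ≤ r (some x)).card := le_min hk h2
    omega

end Aux

section Market
variable {α β : Type*}

lemma mem_ptnrsM {ν : Finset (α × β)} {m : α} {w : β} : w ∈ ptnrsM ν m ↔ (m, w) ∈ ν := by
  simp only [ptnrsM, Finset.mem_image, Finset.mem_filter]
  constructor
  · rintro ⟨⟨a, b⟩, ⟨hp, rfl⟩, rfl⟩; exact hp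
  · intro h; exact ⟨(m, w), ⟨h, rfl⟩, rfl⟩

lemma mem_ptnrsW {ν : Finset (α × β)} {m : α} {w : β} : m ∈ ptnrsW ν w ↔ (m, w) ∈ ν := by
  simp only [ptnrsW, Finset.mem_image, Finset.mem_filter]
  constructor
  · rintro ⟨⟨a, b⟩, ⟨hp, rfl⟩, rfl⟩; exact hp
  · intro h; exact ⟨(m, w), ⟨h, rfl⟩, rfl⟩

lemma ptnrsM_union (ν μ : Finset (α × β)) (m : α) :
    ptnrsM (ν ∪ μ) m = ptnrsM ν m ∪ ptnrsM μ m := by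
  ext w; simp only [mem_ptnrsM, Finset.mem_union]

lemma ptnrsW_union (ν μ : Finset (α × β)) (w : β) :
    ptnrsW (ν ∪ μ) w = ptnrsW ν w ∪ ptnrsW μ w := by
  ext m; simp only [mem_ptnrsW, Finset.mem_union]

lemma mem_swap {ν : Finset (α × β)} {m : α} {w : β} :
    (w, m) ∈ ν.image Prod.swap ↔ (m, w) ∈ ν := by
  constructor
  · intro h
    obtain ⟨⟨x, y⟩, hx, he⟩ := Finset.mem_image.1 h
    simp only [Prod.swap_prod_mk, Prod.mk.injEq] at he
    rwa [← he.2, ← he.1]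
  · intro h; exact Finset.mem_image.2 ⟨(m, w), h, rfl⟩

lemma ptnrsM_swap (ν : Finset (α × β)) (w : β) :
    ptnrsM (ν.image Prod.swap) w = ptnrsW ν w := by
  ext a
  rw [mem_ptnrsM, mem_ptnrsW, mem_swap]

lemma ptnrsW_swap (ν : Finset (α × β)) (m : α) :
    ptnrsW (ν.image Prod.swap) m = ptnrsM ν m := by
  ext b
  rw [mem_ptnrsW, mem_ptnrsM, mem_swap]

lemma card_ptnrsW (ν : Finset (α × β)) (w : β) :
    (ptnrsW ν w).card = (ν.filter fun p => p.2 = w).card := by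
  rw [ptnrsW]
  apply Finset.card_image_of_injOn
  rintro ⟨a, b⟩ ha ⟨c, d⟩ hc h
  simp only [Finset.mem_coe, Finset.mem_filter] at ha hc
  simp only at h
  rw [Prod.mk.injEq]
  exact ⟨h, ha.2.trans hc.2.symm⟩

lemma card_ptnrsM (ν : Finset (α × β)) (m : α) :
    (ptnrsM ν m).card = (ν.filter fun p => p.1 = m).card := by
  rw [ptnrsM]
  apply Finset.card_image_of_injOn
  rintro ⟨a, b⟩ ha ⟨c, d⟩ hc h
  simp only [Finset.mem_coe, Finset.mem_filter] at ha hc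
  simp only at h
  rw [Prod.mk.injEq]
  exact ⟨ha.2.trans hc.2.symm, h⟩

lemma card_eq_sum_ptnrsW (ν : Finset (α × β)) (W : Finset β) (h : ∀ p ∈ ν, p.2 ∈ W) :
    ν.card = ∑ w ∈ W, (ptnrsW ν w).card := by
  rw [Finset.card_eq_sum_card_fiberwise h]
  exact Finset.sum_congr rfl fun w _ => (card_ptnrsW ν w).symm

lemma card_eq_sum_ptnrsM (ν : Finset (α × β)) (M : Finset α) (h : ∀ p ∈ ν, p.1 ∈ M) :
    ν.card = ∑ m ∈ M, (ptnrsM ν m).card := by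
  rw [Finset.card_eq_sum_card_fiberwise h]
  exact Finset.sum_congr rfl fun m _ => (card_ptnrsM ν m).symm

lemma ValidQ_swap {M : Finset α} {W : Finset β} {qM : α → ℕ} {qW : β → ℕ}
    {ν : Finset (α × β)} (h : ValidQ M W qM qW ν) :
    ValidQ W M qW qM (ν.image Prod.swap) := by
  refine ⟨?_, ?_, ?_⟩
  · rintro ⟨w, m⟩ hp
    have := h.1 (m, w) (mem_swap.1 hp)
    exact ⟨this.2, this.1⟩
  · intro w; rw [ptnrsM_swap]; exact h.2.2 w
  · intro m; rw [ptnrsW_swap]; exact h.2.1 m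

lemma StableQ_swap {M : Finset α} {W : Finset β} {prefM : α → Option β → ℕ}
    {prefW : β → Option α → ℕ} {qM : α → ℕ} {qW : β → ℕ} {ν : Finset (α × β)}
    (h : StableQ M W prefM prefW qM qW ν) :
    StableQ W M prefW prefM qW qM (ν.image Prod.swap) := by
  constructor
  · rintro ⟨w, m⟩ hp
    have := h.1 (m, w) (mem_swap.1 hp)
    exact ⟨this.2, this.1⟩
  · intro w hw m hm hb
    obtain ⟨hnot, hPOw, hPOm⟩ := hb
    rw [ptnrsM_swap] at hPOw
    rw [ptnrsW_swap] at hPOm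
    exact h.2 m hm w hw ⟨fun hc => hnot (mem_swap.2 hc), hPOm, hPOw⟩

end Market

section OPP
variable {α σ : Type*} {A : Finset α} {S : Finset σ}
  {prefA : α → Option σ → ℕ} {prefSA : σ → Option α → ℕ}

/-- if advisors slotwise weakly prefer `ν` to `μ`, then students slotwise
weakly prefer `μ` to `ν` -/
lemma opp_lemma (hA : ∀ a ∈ A, StrictPref (prefA a) S)
    {p : α → ℕ} {q q' : σ → ℕ} (hq : ∀ s, q' s ≤ q s)
    {ν μ : Finset (α × σ)}
    (hνV : ValidQ A S p q ν) (hνI : IndRatQ prefA prefSA ν)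
    (hμV : ValidQ A S p q' μ) (hμS : StableQ A S prefA prefSA p q' μ)
    (hADV : ∀ a ∈ A, ∀ j, j < p a →
      prefA a (spot (prefA a) (p a) (ptnrsM μ a) j) ≤
        prefA a (spot (prefA a) (p a) (ptnrsM ν a) j))
    {s : σ} (hs : s ∈ S) {k : ℕ} (hk : k < q' s) :
    prefSA s (spot (prefSA s) (q s) (ptnrsW ν s) k) ≤
      prefSA s (spot (prefSA s) (q' s) (ptnrsW μ s) k) := by
  by_contra hcon
  push_neg at hcon
  set rs := prefSA s with hrs
  set Ps := ptnrsW ν s with hPs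
  set Qs := ptnrsW μ s with hQs
  have hPcard : Ps.card ≤ q s := hνV.2.2 s
  have hQcard : Qs.card ≤ q' s := hμV.2.2 s
  have hkq : k < q s := lt_of_lt_of_le hk (hq s)
  set t := rs (spot rs (q' s) Qs k) + 1 with ht
  have h1 : k + 1 ≤ cnt rs (q s) Ps t := (spot_ge_iff rs hPcard hkq t).1 (by omega)
  have h2 : ¬ (k + 1 ≤ cnt rs (q' s) Qs t) := by
    intro hc
    have := (spot_ge_iff rs hQcard hk t).2 hc
    omega
  have hacc : ∀ x ∈ Qs, rs none < rs (some x) := fun x hx =>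
    ((hμS.1) (x, s) (mem_ptnrsW.1 hx)).2
  have hnone : rs none < t := by
    have := none_le_spot rs hQcard hk hacc
    omega
  rw [cnt, if_neg (by omega)] at h1 h2
  push_neg at h2
  simp only [add_zero] at h1 h2
  have hne : ((Ps.filter fun x => t ≤ rs (some x)) \
      (Qs.filter fun x => t ≤ rs (some x))).Nonempty := by
    rw [← Finset.card_pos]
    have := Finset.card_le_card_sdiff_add_card (s := Ps.filter fun x => t ≤ rs (some x))
      (t := Qs.filter fun x => t ≤ rs (some x))
    omega
  obtain ⟨a, ha⟩ := hne
  rw [Finset.mem_sdiff, Finset.mem_filter] at ha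
  obtain ⟨⟨haPs, hat⟩, haQ⟩ := ha
  have haQs : a ∉ Qs := fun h => haQ (Finset.mem_filter.2 ⟨h, hat⟩)
  have haν : (a, s) ∈ ν := mem_ptnrsW.1 haPs
  have haA : a ∈ A := (hνV.1 _ haν).1
  have hind := hνI _ haν
  have hPOs : PrefOver (prefSA s) (q' s) Qs a := by
    by_cases hfull : Qs.card = q' s
    · obtain ⟨y, hy, hye⟩ := spot_mem_of_full rs hfull hk
      refine Or.inl ⟨y, hy, ?_⟩
      show rs (some y) < rs (some a)
      have h3 : rs (some y) = rs (spot rs (q' s) Qs k) := by rw [hye]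
      omega
    · exact Or.inr ⟨lt_of_le_of_ne hQcard hfull, hind.2⟩
  have hnb := hμS.2 a haA s hs
  have hnotμ : (a, s) ∉ μ := fun h => haQs (mem_ptnrsW.2 h)
  have hnPOa : ¬ PrefOver (prefA a) (p a) (ptnrsM μ a) s := fun h => hnb ⟨hnotμ, h, hPOs⟩
  rw [PrefOver] at hnPOa
  push_neg at hnPOa
  obtain ⟨hall, hcard⟩ := hnPOa
  have haccs : prefA a none < prefA a (some s) := hind.1
  have hμafull : (ptnrsM μ a).card = p a := by
    rcases lt_or_ge (ptnrsM μ a).card (p a) with h | h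
    · exact absurd haccs (not_lt.2 (hcard h))
    · exact le_antisymm (hμV.2.1 a) h
  have hstrict : ∀ y ∈ ptnrsM μ a, prefA a (some s) < prefA a (some y) := by
    intro y hy
    have h1 := hall y hy
    have hyS : y ∈ S := (hμV.1 _ (mem_ptnrsM.1 hy)).2
    have hys : y ≠ s := by
      rintro rfl
      exact hnotμ (mem_ptnrsM.1 hy)
    have hne : prefA a (some y) ≠ prefA a (some s) := by
      intro he
      have := (hA a haA) (Set.mem_insert_of_mem _ ⟨y, hyS, rfl⟩)
        (Set.mem_insert_of_mem _ ⟨s, hs, rfl⟩) he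
      exact hys (Option.some_injective _ this)
    omega
  have hsν : s ∈ ptnrsM ν a := mem_ptnrsM.2 haν
  have hpa : 1 ≤ p a := by
    have h1 : 1 ≤ (ptnrsM ν a).card := Finset.card_pos.2 ⟨s, hsν⟩
    have h2 := hνV.2.1 a
    omega
  set t' := prefA a (some s) + 1 with ht'
  have hLHS : t' ≤ prefA a (spot (prefA a) (p a) (ptnrsM μ a) (p a - 1)) := by
    rw [spot_ge_iff (prefA a) (le_of_eq hμafull) (by omega) t']
    rw [cnt, if_neg (by omega)]
    have : (ptnrsM μ a).filter (fun x => t' ≤ prefA a (some x)) = ptnrsM μ a :=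
      Finset.filter_true_of_mem fun x hx => by have := hstrict x hx; omega
    rw [this]
    omega
  have hRHS : prefA a (spot (prefA a) (p a) (ptnrsM ν a) (p a - 1)) < t' := by
    by_contra hge
    push_neg at hge
    have := (spot_ge_iff (prefA a) (hνV.2.1 a) (by omega) t').1 hge
    rw [cnt, if_neg (by omega)] at this
    have hsubs : (ptnrsM ν a).filter (fun x => t' ≤ prefA a (some x)) ⊆
        (ptnrsM ν a).erase s := by
      intro x hx
      rw [Finset.mem_filter] at hx
      refine Finset.mem_erase.2 ⟨?_, hx.1⟩
      rintro rfl
      omega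
    have := Finset.card_le_card hsubs
    rw [Finset.card_erase_of_mem hsν] at this
    have h2 := hνV.2.1 a
    omega
  have := hADV a haA (p a - 1) (by omega)
  omega

end OPP

section Join
variable {χ ω : Type*}

/-- the women-side top-`g'` join of a `(fν, g)`-stable matching and an `(fμ, g')`-stable
matching is `(fν, g')`-valid and stable -/
lemma join_lemma {M : Finset χ} {W : Finset ω}
    {prefM : χ → Option ω → ℕ} {prefW : ω → Option χ → ℕ}
    (hPM : ∀ m ∈ M, StrictPref (prefM m) W)
    (hPW : ∀ w ∈ W, StrictPref (prefW w) M)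
    {fν fμ : χ → ℕ} {g g' : ω → ℕ}
    (hf : ∀ m, fμ m ≤ fν m) (hg : ∀ w, g' w ≤ g w)
    (hQ : (∀ m, fν m = fμ m) ∨ (∀ w, g w = g' w))
    {ν μ : Finset (χ × ω)}
    (hνV : ValidQ M W fν g ν) (hνS : StableQ M W prefM prefW fν g ν)
    (hμV : ValidQ M W fμ g' μ) (hμS : StableQ M W prefM prefW fμ g' μ) :
    ValidQ M W fν g' ((ν ∪ μ).filter fun p =>
        p.1 ∈ topk (prefW p.2) (g' p.2) (ptnrsW ν p.2 ∪ ptnrsW μ p.2)) ∧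
    StableQ M W prefM prefW fν g' ((ν ∪ μ).filter fun p =>
        p.1 ∈ topk (prefW p.2) (g' p.2) (ptnrsW ν p.2 ∪ ptnrsW μ p.2)) ∧
    ∀ w, ptnrsW ((ν ∪ μ).filter fun p =>
        p.1 ∈ topk (prefW p.2) (g' p.2) (ptnrsW ν p.2 ∪ ptnrsW μ p.2)) w
      = topk (prefW w) (g' w) (ptnrsW ν w ∪ ptnrsW μ w) := by
  classical
  set U : ω → Finset χ := fun w => ptnrsW ν w ∪ ptnrsW μ w with hU
  set lam : Finset (χ × ω) := (ν ∪ μ).filter fun p =>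
      p.1 ∈ topk (prefW p.2) (g' p.2) (U p.2) with hlam
  -- basic facts
  have hlam_sub : lam ⊆ ν ∪ μ := Finset.filter_subset _ _
  have hLw : ∀ w, ptnrsW lam w = topk (prefW w) (g' w) (U w) := by
    intro w
    ext m
    rw [mem_ptnrsW]
    constructor
    · intro h
      exact (Finset.mem_filter.1 h).2
    · intro h
      refine Finset.mem_filter.2 ⟨?_, h⟩
      have := topk_subset (prefW w) (g' w) (U w) h
      rw [hU] at this
      rcases Finset.mem_union.1 this with h' | h'
      · exact Finset.mem_union_left _ (mem_ptnrsW.1 h')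
      · exact Finset.mem_union_right _ (mem_ptnrsW.1 h')
  have hLm_sub : ∀ m, ptnrsM lam m ⊆ ptnrsM ν m ∪ ptnrsM μ m := by
    intro m x hx
    rw [← ptnrsM_union]
    exact mem_ptnrsM.2 (hlam_sub (mem_ptnrsM.1 hx))
  have hpairs : ∀ p ∈ lam, p.1 ∈ M ∧ p.2 ∈ W := by
    intro p hp
    rcases Finset.mem_union.1 (hlam_sub hp) with h | h
    · exact hνV.1 p h
    · exact hμV.1 p h
  have hUacc : ∀ w, ∀ x ∈ U w, prefW w none < prefW w (some x) := by
    intro w x hx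
    rcases Finset.mem_union.1 hx with h | h
    · exact (hνS.1 (x, w) (mem_ptnrsW.1 h)).2
    · exact (hμS.1 (x, w) (mem_ptnrsW.1 h)).2
  have hNsubU : ∀ w, ptnrsW ν w ⊆ U w := fun w => Finset.subset_union_left
  have hMsubU : ∀ w, ptnrsW μ w ⊆ U w := fun w => Finset.subset_union_right
  -- D1 : a chosen non-ν partner is desired by w over ν
  have hD1 : ∀ {w}, w ∈ W → ∀ {m}, m ∈ topk (prefW w) (g' w) (U w) →
      m ∉ ptnrsW ν w → m ∈ M → PrefOver (prefW w) (g w) (ptnrsW ν w) m := by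
    intro w hw m hmtop hmν hmM
    by_cases hcase : g' w ≤ (ptnrsW ν w).card
    · have hUcard : g' w ≤ (U w).card :=
        le_trans hcase (Finset.card_le_card (hNsubU w))
      have hLcard : (topk (prefW w) (g' w) (U w)).card = g' w := by
        rw [card_topk]; omega
      have hnsub : ¬ ptnrsW ν w ⊆ topk (prefW w) (g' w) (U w) := by
        intro hss
        have h1 : ptnrsW ν w ⊆ (topk (prefW w) (g' w) (U w)).erase m := fun x hx =>
          Finset.mem_erase.2 ⟨fun he => hmν (he ▸ hx), hss hx⟩
        have := Finset.card_le_card h1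
        rw [Finset.card_erase_of_mem hmtop, hLcard] at this
        have hpos : 1 ≤ g' w := by
          rw [← hLcard]; exact Finset.card_pos.2 ⟨m, hmtop⟩
        omega
      obtain ⟨b, hbN, hbt⟩ := Finset.not_subset.1 hnsub
      refine Or.inl ⟨b, hbN, ?_⟩
      have hle := topk_sep (prefW w) (g' w) (U w) (hNsubU w hbN) hbt hmtop
      have hbM : b ∈ M := (hνV.1 _ (mem_ptnrsW.1 hbN)).1
      have hbm : b ≠ m := fun he => hmν (he ▸ hbN)
      have hne : prefW w (some b) ≠ prefW w (some m) := by
        intro he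
        have := (hPW w hw) (Set.mem_insert_of_mem _ ⟨b, hbM, rfl⟩)
          (Set.mem_insert_of_mem _ ⟨m, hmM, rfl⟩) he
        exact hbm (Option.some_injective _ this)
      omega
    · push_neg at hcase
      exact Or.inr ⟨lt_of_lt_of_le hcase (hg w),
        hUacc w m (topk_subset (prefW w) (g' w) (U w) hmtop)⟩
  -- D2 : a chosen non-μ partner is desired by w over μ
  have hD2 : ∀ {w}, w ∈ W → ∀ {m}, m ∈ topk (prefW w) (g' w) (U w) →
      m ∉ ptnrsW μ w → m ∈ M → PrefOver (prefW w) (g' w) (ptnrsW μ w) m := by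
    intro w hw m hmtop hmμ hmM
    by_cases hcase : g' w ≤ (ptnrsW μ w).card
    · have hMcard : (ptnrsW μ w).card = g' w := le_antisymm (hμV.2.2 w) hcase
      have hLle : (topk (prefW w) (g' w) (U w)).card ≤ g' w := by
        rw [card_topk]; exact min_le_left _ _
      have hnsub : ¬ ptnrsW μ w ⊆ topk (prefW w) (g' w) (U w) := by
        intro hss
        have h1 : ptnrsW μ w ⊆ (topk (prefW w) (g' w) (U w)).erase m := fun x hx =>
          Finset.mem_erase.2 ⟨fun he => hmμ (he ▸ hx), hss hx⟩
        have := Finset.card_le_card h1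
        rw [Finset.card_erase_of_mem hmtop] at this
        have hpos : 1 ≤ (topk (prefW w) (g' w) (U w)).card :=
          Finset.card_pos.2 ⟨m, hmtop⟩
        omega
      obtain ⟨b, hbN, hbt⟩ := Finset.not_subset.1 hnsub
      refine Or.inl ⟨b, hbN, ?_⟩
      have hle := topk_sep (prefW w) (g' w) (U w) (hMsubU w hbN) hbt hmtop
      have hbM : b ∈ M := (hμV.1 _ (mem_ptnrsW.1 hbN)).1
      have hbm : b ≠ m := fun he => hmμ (he ▸ hbN)
      have hne : prefW w (some b) ≠ prefW w (some m) := by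
        intro he
        have := (hPW w hw) (Set.mem_insert_of_mem _ ⟨b, hbM, rfl⟩)
          (Set.mem_insert_of_mem _ ⟨m, hmM, rfl⟩) he
        exact hbm (Option.some_injective _ this)
      omega
    · push_neg at hcase
      exact Or.inr ⟨hcase,
        hUacc w m (topk_subset (prefW w) (g' w) (U w) hmtop)⟩
  -- D3 : kept non-ν partners on the m side
  have hD3 : ∀ {m x}, x ∈ ptnrsM lam m → x ∉ ptnrsM ν m →
      (ptnrsM ν m).card = fν m ∧ ∀ y ∈ ptnrsM ν m, prefM m (some x) < prefM m (some y) := by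
    intro m x hxL hxν
    have hpair : (m, x) ∈ lam := mem_ptnrsM.1 hxL
    have hmem := hpairs _ hpair
    have hmM : m ∈ M := hmem.1
    have hxW : x ∈ W := hmem.2
    have hnν : (m, x) ∉ ν := fun h => hxν (mem_ptnrsM.2 h)
    have hμmem : (m, x) ∈ μ := by
      rcases Finset.mem_union.1 (hlam_sub hpair) with h | h
      · exact absurd h hnν
      · exact h
    have hmtop : m ∈ topk (prefW x) (g' x) (U x) := by
      rw [← hLw x]
      exact mem_ptnrsW.2 hpair
    have hmνx : m ∉ ptnrsW ν x := fun h => hnν (mem_ptnrsW.1 h)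
    have hPO := hD1 hxW hmtop hmνx hmM
    have hnb := hνS.2 m hmM x hxW
    have hnPOm : ¬ PrefOver (prefM m) (fν m) (ptnrsM ν m) x := fun h =>
      hnb ⟨hnν, h, hPO⟩
    rw [PrefOver] at hnPOm
    push_neg at hnPOm
    obtain ⟨hall, hcd⟩ := hnPOm
    have haccx : prefM m none < prefM m (some x) := (hμS.1 _ hμmem).1
    have hfull : (ptnrsM ν m).card = fν m := by
      rcases lt_or_ge (ptnrsM ν m).card (fν m) with h | h
      · exact absurd haccx (not_lt.2 (hcd h))
      · exact le_antisymm (hνV.2.1 m) h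
    refine ⟨hfull, fun y hy => ?_⟩
    have h1 := hall y hy
    have hyW : y ∈ W := (hνV.1 _ (mem_ptnrsM.1 hy)).2
    have hyx : y ≠ x := fun he => hxν (he ▸ hy)
    have hne : prefM m (some y) ≠ prefM m (some x) := by
      intro he
      have := (hPM m hmM) (Set.mem_insert_of_mem _ ⟨y, hyW, rfl⟩)
        (Set.mem_insert_of_mem _ ⟨x, hxW, rfl⟩) he
      exact hyx (Option.some_injective _ this)
    omega
  -- D4 : kept non-μ partners on the m side
  have hD4 : ∀ {m x}, x ∈ ptnrsM lam m → x ∉ ptnrsM μ m →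
      (ptnrsM μ m).card = fμ m ∧ ∀ y ∈ ptnrsM μ m, prefM m (some x) < prefM m (some y) := by
    intro m x hxL hxμ
    have hpair : (m, x) ∈ lam := mem_ptnrsM.1 hxL
    have hmem := hpairs _ hpair
    have hmM : m ∈ M := hmem.1
    have hxW : x ∈ W := hmem.2
    have hnμ : (m, x) ∉ μ := fun h => hxμ (mem_ptnrsM.2 h)
    have hνmem : (m, x) ∈ ν := by
      rcases Finset.mem_union.1 (hlam_sub hpair) with h | h
      · exact h
      · exact absurd h hnμ
    have hmtop : m ∈ topk (prefW x) (g' x) (U x) := by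
      rw [← hLw x]
      exact mem_ptnrsW.2 hpair
    have hmμx : m ∉ ptnrsW μ x := fun h => hnμ (mem_ptnrsW.1 h)
    have hPO := hD2 hxW hmtop hmμx hmM
    have hnb := hμS.2 m hmM x hxW
    have hnPOm : ¬ PrefOver (prefM m) (fμ m) (ptnrsM μ m) x := fun h =>
      hnb ⟨hnμ, h, hPO⟩
    rw [PrefOver] at hnPOm
    push_neg at hnPOm
    obtain ⟨hall, hcd⟩ := hnPOm
    have haccx : prefM m none < prefM m (some x) := (hνS.1 _ hνmem).1
    have hfull : (ptnrsM μ m).card = fμ m := by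
      rcases lt_or_ge (ptnrsM μ m).card (fμ m) with h | h
      · exact absurd haccx (not_lt.2 (hcd h))
      · exact le_antisymm (hμV.2.1 m) h
    refine ⟨hfull, fun y hy => ?_⟩
    have h1 := hall y hy
    have hyW : y ∈ W := (hμV.1 _ (mem_ptnrsM.1 hy)).2
    have hyx : y ≠ x := fun he => hxμ (he ▸ hy)
    have hne : prefM m (some y) ≠ prefM m (some x) := by
      intro he
      have := (hPM m hmM) (Set.mem_insert_of_mem _ ⟨y, hyW, rfl⟩)
        (Set.mem_insert_of_mem _ ⟨x, hxW, rfl⟩) he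
      exact hyx (Option.some_injective _ this)
    omega
  -- D5 : dichotomy
  have hD5 : ∀ m, ptnrsM lam m ⊆ ptnrsM ν m ∨ ptnrsM lam m ⊆ ptnrsM μ m := by
    intro m
    by_cases h1 : ptnrsM lam m ⊆ ptnrsM ν m
    · exact Or.inl h1
    · right
      obtain ⟨x, hxL, hxν⟩ := Finset.not_subset.1 h1
      intro y hyL
      by_contra hyμ
      have hx := hD3 hxL hxν
      have hy := hD4 hyL hyμ
      have hxμ : x ∈ ptnrsM μ m := by
        rcases Finset.mem_union.1 (hLm_sub m hxL) with h | h
        · exact absurd h hxν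
        · exact h
      have hyν : y ∈ ptnrsM ν m := by
        rcases Finset.mem_union.1 (hLm_sub m hyL) with h | h
        · exact h
        · exact absurd h hyμ
      have h1 := hx.2 y hyν
      have h2 := hy.2 x hxμ
      omega
  -- D6 : m-side validity
  have hD6 : ∀ m, (ptnrsM lam m).card ≤ fν m := by
    intro m
    rcases hD5 m with h | h
    · exact le_trans (Finset.card_le_card h) (hνV.2.1 m)
    · exact le_trans (le_trans (Finset.card_le_card h) (hμV.2.1 m)) (hf m)
  -- w-side cardinality of the join
  have hLwcard : ∀ w, (ptnrsW lam w).card = min (g' w) (U w).card := by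
    intro w
    rw [hLw w, card_topk]
  -- III : slack transfer via double counting
  have hIII : ∀ m ∈ M, (ptnrsM lam m).card < fν m →
      (ptnrsM ν m).card < fν m ∨ (ptnrsM μ m).card < fμ m := by
    rcases hQ with hQl | hQr
    · -- fν = fμ : compare with μ
      have hle : ∀ m ∈ M, (ptnrsM lam m).card ≤ (ptnrsM μ m).card := by
        intro m _
        by_cases h : ptnrsM lam m ⊆ ptnrsM μ m
        · exact Finset.card_le_card h
        · obtain ⟨y, hyL, hyμ⟩ := Finset.not_subset.1 h
          have := (hD4 hyL hyμ).1
          rw [this, ← hQl m]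
          exact hD6 m
      have hwge : ∀ w ∈ W, (ptnrsW μ w).card ≤ (ptnrsW lam w).card := by
        intro w _
        rw [hLwcard w]
        exact le_min (hμV.2.2 w) (Finset.card_le_card (hMsubU w))
      have hsum1 : ∑ m ∈ M, (ptnrsM lam m).card = ∑ w ∈ W, (ptnrsW lam w).card := by
        rw [← card_eq_sum_ptnrsM lam M (fun p hp => (hpairs p hp).1),
          ← card_eq_sum_ptnrsW lam W (fun p hp => (hpairs p hp).2)]
      have hsum2 : ∑ m ∈ M, (ptnrsM μ m).card = ∑ w ∈ W, (ptnrsW μ w).card := by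
        rw [← card_eq_sum_ptnrsM μ M (fun p hp => (hμV.1 p hp).1),
          ← card_eq_sum_ptnrsW μ W (fun p hp => (hμV.1 p hp).2)]
      have heq : ∑ m ∈ M, (ptnrsM lam m).card = ∑ m ∈ M, (ptnrsM μ m).card := by
        have h1 := Finset.sum_le_sum hle
        have h2 := Finset.sum_le_sum hwge
        omega
      have hpt := (Finset.sum_eq_sum_iff_of_le hle).1 heq
      intro m hm hc
      right
      rw [← hpt m hm, ← hQl m]
      exact hc
    · -- g = g' : compare with ν
      have hle : ∀ m ∈ M, (ptnrsM lam m).card ≤ (ptnrsM ν m).card := by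
        intro m _
        by_cases h : ptnrsM lam m ⊆ ptnrsM ν m
        · exact Finset.card_le_card h
        · obtain ⟨y, hyL, hyν⟩ := Finset.not_subset.1 h
          have := (hD3 hyL hyν).1
          rw [this]
          exact hD6 m
      have hwge : ∀ w ∈ W, (ptnrsW ν w).card ≤ (ptnrsW lam w).card := by
        intro w _
        rw [hLwcard w]
        refine le_min ?_ (Finset.card_le_card (hNsubU w))
        rw [← hQr w]
        exact hνV.2.2 w
      have hsum1 : ∑ m ∈ M, (ptnrsM lam m).card = ∑ w ∈ W, (ptnrsW lam w).card := by
        rw [← card_eq_sum_ptnrsM lam M (fun p hp => (hpairs p hp).1),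
          ← card_eq_sum_ptnrsW lam W (fun p hp => (hpairs p hp).2)]
      have hsum2 : ∑ m ∈ M, (ptnrsM ν m).card = ∑ w ∈ W, (ptnrsW ν w).card := by
        rw [← card_eq_sum_ptnrsM ν M (fun p hp => (hνV.1 p hp).1),
          ← card_eq_sum_ptnrsW ν W (fun p hp => (hνV.1 p hp).2)]
      have heq : ∑ m ∈ M, (ptnrsM lam m).card = ∑ m ∈ M, (ptnrsM ν m).card := by
        have h1 := Finset.sum_le_sum hle
        have h2 := Finset.sum_le_sum hwge
        omega
      have hpt := (Finset.sum_eq_sum_iff_of_le hle).1 heq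
      intro m hm hc
      left
      rw [← hpt m hm]
      exact hc
  -- validity
  have hvalid : ValidQ M W fν g' lam := by
    refine ⟨hpairs, hD6, fun w => ?_⟩
    rw [hLwcard w]
    exact min_le_left _ _
  -- stability
  have hstab : StableQ M W prefM prefW fν g' lam := by
    constructor
    · intro p hp
      rcases Finset.mem_union.1 (hlam_sub hp) with h | h
      · exact hνS.1 p h
      · exact hμS.1 p h
    · intro m hm w hw hblock
      obtain ⟨hnotlam, hPOm, hPOw⟩ := hblock
      rw [hLw w] at hPOw
      have hmLw : m ∉ topk (prefW w) (g' w) (U w) := by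
        intro h
        exact hnotlam (mem_ptnrsW.1 (by rw [hLw w]; exact h))
      have hmU : m ∉ U w := by
        intro hmUw
        rcases hPOw with ⟨y, hy, hylt⟩ | ⟨hc, hacc⟩
        · exact absurd hylt
            (not_lt.2 (topk_sep (prefW w) (g' w) (U w) hmUw hmLw hy))
        · have h1 : (U w).card < g' w := by
            rw [card_topk] at hc
            omega
          have h2 : topk (prefW w) (g' w) (U w) = U w := by
            apply Finset.eq_of_subset_of_card_le (topk_subset _ _ _)
            rw [card_topk]
            omega
          exact hmLw (by rw [h2]; exact hmUw)
      have hmν : (m, w) ∉ ν := fun h => hmU (Finset.mem_union_left _ (mem_ptnrsW.2 h))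
      have hmμ : (m, w) ∉ μ := fun h => hmU (Finset.mem_union_right _ (mem_ptnrsW.2 h))
      have haccm : prefW w none < prefW w (some m) := by
        rcases hPOw with ⟨y, hy, hylt⟩ | ⟨_, hacc⟩
        · exact lt_trans (hUacc w y (topk_subset _ _ _ hy)) hylt
        · exact hacc
      -- blocking handler against ν
      have hKν : ¬ PrefOver (prefM m) (fν m) (ptnrsM ν m) w := by
        intro hPO
        have hnb := hνS.2 m hm w hw
        have hnPOw : ¬ PrefOver (prefW w) (g w) (ptnrsW ν w) m := fun h =>
          hnb ⟨hmν, hPO, h⟩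
        rw [PrefOver] at hnPOw
        push_neg at hnPOw
        obtain ⟨hall, hcd⟩ := hnPOw
        have hNcard : (ptnrsW ν w).card = g w := by
          rcases lt_or_ge (ptnrsW ν w).card (g w) with h | h
          · exact absurd haccm (not_lt.2 (hcd h))
          · exact le_antisymm (hνV.2.2 w) h
        have hstrict : ∀ b ∈ ptnrsW ν w, prefW w (some m) + 1 ≤ prefW w (some b) := by
          intro b hb
          have h1 := hall b hb
          have hbM : b ∈ M := (hνV.1 _ (mem_ptnrsW.1 hb)).1
          have hbm : b ≠ m := fun he => hmU (he ▸ hNsubU w hb)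
          have hne : prefW w (some b) ≠ prefW w (some m) := by
            intro he
            have := (hPW w hw) (Set.mem_insert_of_mem _ ⟨b, hbM, rfl⟩)
              (Set.mem_insert_of_mem _ ⟨m, hm, rfl⟩) he
            exact hbm (Option.some_injective _ this)
          omega
        have hcnt : g' w ≤ ((U w).filter fun x =>
            prefW w (some m) + 1 ≤ prefW w (some x)).card := by
          have hsub : ptnrsW ν w ⊆ (U w).filter fun x =>
              prefW w (some m) + 1 ≤ prefW w (some x) := fun b hb =>
            Finset.mem_filter.2 ⟨hNsubU w hb, hstrict b hb⟩
          have := Finset.card_le_card hsub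
          have := hg w
          omega
        have htf := topk_filter_card (prefW w) (g' w) (U w) (prefW w (some m) + 1)
        rw [min_eq_left hcnt] at htf
        have hfle : ((topk (prefW w) (g' w) (U w)).filter fun x =>
            prefW w (some m) + 1 ≤ prefW w (some x)).card
            ≤ (topk (prefW w) (g' w) (U w)).card :=
          Finset.card_le_card (Finset.filter_subset _ _)
        have htople : (topk (prefW w) (g' w) (U w)).card ≤ g' w := by
          rw [card_topk]; exact min_le_left _ _
        have hfeq : (topk (prefW w) (g' w) (U w)).filter
            (fun x => prefW w (some m) + 1 ≤ prefW w (some x))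
            = topk (prefW w) (g' w) (U w) := by
          apply Finset.eq_of_subset_of_card_le (Finset.filter_subset _ _)
          omega
        rcases hPOw with ⟨y, hy, hylt⟩ | ⟨hc, _⟩
        · have : y ∈ (topk (prefW w) (g' w) (U w)).filter
              (fun x => prefW w (some m) + 1 ≤ prefW w (some x)) := by
            rw [hfeq]; exact hy
          have := (Finset.mem_filter.1 this).2
          omega
        · omega
      -- blocking handler against μ
      have hKμ : ¬ PrefOver (prefM m) (fμ m) (ptnrsM μ m) w := by
        intro hPO
        have hnb := hμS.2 m hm w hw
        have hnPOw : ¬ PrefOver (prefW w) (g' w) (ptnrsW μ w) m := fun h =>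
          hnb ⟨hmμ, hPO, h⟩
        rw [PrefOver] at hnPOw
        push_neg at hnPOw
        obtain ⟨hall, hcd⟩ := hnPOw
        have hNcard : (ptnrsW μ w).card = g' w := by
          rcases lt_or_ge (ptnrsW μ w).card (g' w) with h | h
          · exact absurd haccm (not_lt.2 (hcd h))
          · exact le_antisymm (hμV.2.2 w) h
        have hstrict : ∀ b ∈ ptnrsW μ w, prefW w (some m) + 1 ≤ prefW w (some b) := by
          intro b hb
          have h1 := hall b hb
          have hbM : b ∈ M := (hμV.1 _ (mem_ptnrsW.1 hb)).1
          have hbm : b ≠ m := fun he => hmU (he ▸ hMsubU w hb)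
          have hne : prefW w (some b) ≠ prefW w (some m) := by
            intro he
            have := (hPW w hw) (Set.mem_insert_of_mem _ ⟨b, hbM, rfl⟩)
              (Set.mem_insert_of_mem _ ⟨m, hm, rfl⟩) he
            exact hbm (Option.some_injective _ this)
          omega
        have hcnt : g' w ≤ ((U w).filter fun x =>
            prefW w (some m) + 1 ≤ prefW w (some x)).card := by
          have hsub : ptnrsW μ w ⊆ (U w).filter fun x =>
              prefW w (some m) + 1 ≤ prefW w (some x) := fun b hb =>
            Finset.mem_filter.2 ⟨hMsubU w hb, hstrict b hb⟩
          have := Finset.card_le_card hsub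
          omega
        have htf := topk_filter_card (prefW w) (g' w) (U w) (prefW w (some m) + 1)
        rw [min_eq_left hcnt] at htf
        have hfle : ((topk (prefW w) (g' w) (U w)).filter fun x =>
            prefW w (some m) + 1 ≤ prefW w (some x)).card
            ≤ (topk (prefW w) (g' w) (U w)).card :=
          Finset.card_le_card (Finset.filter_subset _ _)
        have htople : (topk (prefW w) (g' w) (U w)).card ≤ g' w := by
          rw [card_topk]; exact min_le_left _ _
        have hfeq : (topk (prefW w) (g' w) (U w)).filter
            (fun x => prefW w (some m) + 1 ≤ prefW w (some x))
            = topk (prefW w) (g' w) (U w) := by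
          apply Finset.eq_of_subset_of_card_le (Finset.filter_subset _ _)
          omega
        rcases hPOw with ⟨y, hy, hylt⟩ | ⟨hc, _⟩
        · have : y ∈ (topk (prefW w) (g' w) (U w)).filter
              (fun x => prefW w (some m) + 1 ≤ prefW w (some x)) := by
            rw [hfeq]; exact hy
          have := (Finset.mem_filter.1 this).2
          omega
        · omega
      -- dispatch the m-side of the block
      rcases hPOm with ⟨t, htL, htlt⟩ | ⟨hc, haccw⟩
      · rcases Finset.mem_union.1 (hLm_sub m htL) with h | h
        · exact hKν (Or.inl ⟨t, h, htlt⟩)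
        · exact hKμ (Or.inl ⟨t, h, htlt⟩)
      · rcases hIII m hm hc with h | h
        · exact hKν (Or.inr ⟨h, haccw⟩)
        · exact hKμ (Or.inr ⟨h, haccw⟩)
  exact ⟨hvalid, hstab, hLw⟩

end Join


/-- In the PhD algorithm with quotas (fixed proposing side on each
submarket at every iteration), a student's matches on the advisor–student market cannot
decrease over iterations: for every iteration `τ` and every spot `k < q_s^(τ+1)`, the
student's `k`-th best advisor can only improve; in particular the number of advisors
matched to `s` at iteration `τ + 1` is at least `min(q_s^(τ+1), #advisors at τ)`
(iterations are 0-indexed). -/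
theorem student_advisor_spots_improve
    (A : Finset α) (S : Finset σ) (C : Finset γ)
    (prefA : α → Option σ → ℕ) (prefC : γ → Option σ → ℕ)
    (prefSA : σ → Option α → ℕ) (prefSC : σ → Option γ → ℕ)
    (hA : ∀ a ∈ A, StrictPref (prefA a) S)
    (hC : ∀ c ∈ C, StrictPref (prefC c) S)
    (hSA : ∀ s ∈ S, StrictPref (prefSA s) A)
    (hSC : ∀ s ∈ S, StrictPref (prefSC s) C)
    (qA : α → ℕ) (qS : σ → ℕ) (qC : γ → ℕ)
    -- one run of the PhD algorithm with quotas: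
    (qs qt : ℕ → σ → ℕ)
    (μAS : ℕ → Finset (α × σ)) (μSC : ℕ → Finset (σ × γ))
    (hqs0 : qs 0 = qS)
    -- the extended Gale–Shapley matching on (A, S) with a fixed proposing side:
    (hoptAS : (∀ τ, ManOptQ A S prefA prefSA qA (qs τ) (μAS τ)) ∨
              (∀ τ, WomanOptQ A S prefA prefSA qA (qs τ) (μAS τ)))
    -- the student's capacity on the (S, C) market is his number of advisors:
    (hqt : ∀ τ s, qt τ s = (ptnrsW (μAS τ) s).card)
    -- the extended Gale–Shapley matching on (S, C) with a fixed proposing side: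
    (hoptSC : (∀ τ, ManOptQ S C prefSC prefC (qt τ) qC (μSC τ)) ∨
              (∀ τ, WomanOptQ S C prefSC prefC (qt τ) qC (μSC τ)))
    -- the student's capacity on (A, S) is reduced by the number of unfilled spots:
    (hupd : ∀ τ s, qs (τ + 1) s + qt τ s = qs τ s + (ptnrsM (μSC τ) s).card) :
    (∀ τ, ∀ s ∈ S, ∀ k, k < qs (τ + 1) s →
        prefSA s (spot (prefSA s) (qs τ s) (ptnrsW (μAS τ) s) k) ≤
          prefSA s (spot (prefSA s) (qs (τ + 1) s) (ptnrsW (μAS (τ + 1)) s) k)) ∧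
    (∀ τ, ∀ s ∈ S,
        min (qs (τ + 1) s) ((ptnrsW (μAS τ) s).card) ≤ (ptnrsW (μAS (τ + 1)) s).card) := by
  classical
  have hV : ∀ τ, ValidQ A S qA (qs τ) (μAS τ) := by
    rcases hoptAS with h | h <;> exact fun τ => (h τ).1
  have hSt : ∀ τ, StableQ A S prefA prefSA qA (qs τ) (μAS τ) := by
    rcases hoptAS with h | h <;> exact fun τ => (h τ).2.1
  have hVSC : ∀ τ, ValidQ S C (qt τ) qC (μSC τ) := by
    rcases hoptSC with h | h <;> exact fun τ => (h τ).1
  have hqmono : ∀ τ s, qs (τ + 1) s ≤ qs τ s := by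
    intro τ s
    have h1 := (hVSC τ).2.1 s
    have h2 := hupd τ s
    omega
  have goal1 : ∀ τ, ∀ s ∈ S, ∀ k, k < qs (τ + 1) s →
      prefSA s (spot (prefSA s) (qs τ s) (ptnrsW (μAS τ) s) k) ≤
        prefSA s (spot (prefSA s) (qs (τ + 1) s) (ptnrsW (μAS (τ + 1)) s) k) := by
    intro τ s hs k hk
    rcases hoptAS with hMan | hWom
    · -- advisor-proposing case: advisor-side join, then the opposition lemma
      have hjoin := join_lemma (M := S) (W := A) (prefM := prefSA) (prefW := prefA)
        hSA hA (fν := qs τ) (fμ := qs (τ + 1)) (g := qA) (g' := qA)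
        (hqmono τ) (fun a => le_refl (qA a)) (Or.inr fun _ => rfl)
        (ValidQ_swap (hV τ)) (StableQ_swap (hSt τ))
        (ValidQ_swap (hV (τ + 1))) (StableQ_swap (hSt (τ + 1)))
      obtain ⟨hkV, hkS, hkW⟩ := hjoin
      set νw := (μAS τ).image Prod.swap with hνw
      set μw := (μAS (τ + 1)).image Prod.swap with hμw
      set kapw := (νw ∪ μw).filter (fun p =>
        p.1 ∈ topk (prefA p.2) (qA p.2) (ptnrsW νw p.2 ∪ ptnrsW μw p.2)) with hkapw
      have hkapV : ValidQ A S qA (qs τ) (kapw.image Prod.swap) := ValidQ_swap hkV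
      have hkapS : StableQ A S prefA prefSA qA (qs τ) (kapw.image Prod.swap) :=
        StableQ_swap hkS
      have hADV : ∀ a ∈ A, ∀ j, j < qA a →
          prefA a (spot (prefA a) (qA a) (ptnrsM (μAS (τ + 1)) a) j) ≤
            prefA a (spot (prefA a) (qA a) (ptnrsM (μAS τ) a) j) := by
        intro a ha j hj
        have hopt := (hMan τ).2.2 (kapw.image Prod.swap) hkapV hkapS a ha j hj
        have hkapM : ptnrsM (kapw.image Prod.swap) a
            = topk (prefA a) (qA a) (ptnrsM (μAS τ) a ∪ ptnrsM (μAS (τ + 1)) a) := by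
          rw [ptnrsM_swap kapw a, hkW a, ptnrsW_swap, ptnrsW_swap]
        have haccA : ∀ x ∈ ptnrsM (μAS τ) a ∪ ptnrsM (μAS (τ + 1)) a,
            prefA a none < prefA a (some x) := by
          intro x hx
          rcases Finset.mem_union.1 hx with h | h
          · exact ((hSt τ).1 (a, x) (mem_ptnrsM.1 h)).1
          · exact ((hSt (τ + 1)).1 (a, x) (mem_ptnrsM.1 h)).1
        have hcmp := cmp_spot (prefA a)
          (P := ptnrsM (μAS (τ + 1)) a)
          (U := ptnrsM (μAS τ) a ∪ ptnrsM (μAS (τ + 1)) a)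
          Finset.subset_union_right haccA ((hV (τ + 1)).2.1 a) (le_refl (qA a)) hj
        rw [← hkapM] at hcmp
        exact le_trans hcmp hopt
      exact opp_lemma hA (hqmono τ) (hV τ) ((hSt τ).1) (hV (τ + 1)) (hSt (τ + 1))
        hADV hs hk
    · -- student-proposing case: student-side join and optimality at τ + 1
      have hjoin := join_lemma (M := A) (W := S) (prefM := prefA) (prefW := prefSA)
        hA hSA (fν := qA) (fμ := qA) (g := qs τ) (g' := qs (τ + 1))
        (fun a => le_refl (qA a)) (hqmono τ) (Or.inl fun _ => rfl)
        (hV τ) (hSt τ) (hV (τ + 1)) (hSt (τ + 1))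
      obtain ⟨hlV, hlS, hlW⟩ := hjoin
      have hopt := (hWom (τ + 1)).2.2 _ hlV hlS s hs k hk
      have haccU : ∀ x ∈ ptnrsW (μAS τ) s ∪ ptnrsW (μAS (τ + 1)) s,
          prefSA s none < prefSA s (some x) := by
        intro x hx
        rcases Finset.mem_union.1 hx with h | h
        · exact ((hSt τ).1 (x, s) (mem_ptnrsW.1 h)).2
        · exact ((hSt (τ + 1)).1 (x, s) (mem_ptnrsW.1 h)).2
      have hcmp := cmp_spot (prefSA s)
        (P := ptnrsW (μAS τ) s)
        (U := ptnrsW (μAS τ) s ∪ ptnrsW (μAS (τ + 1)) s)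
        Finset.subset_union_left haccU ((hV τ).2.2 s) (hqmono τ s) hk
      rw [← hlW s] at hcmp
      exact le_trans hcmp hopt
  refine ⟨goal1, ?_⟩
  intro τ s hs
  by_contra hcon
  push_neg at hcon
  obtain ⟨hc1, hc2⟩ := lt_min_iff.1 hcon
  set k := (ptnrsW (μAS (τ + 1)) s).card with hkdef
  have h1 := goal1 τ s hs k hc1
  have hlow : prefSA s none + 1 ≤
      prefSA s (spot (prefSA s) (qs τ s) (ptnrsW (μAS τ) s) k) := by
    rw [spot_ge_iff (prefSA s) ((hV τ).2.2 s) (lt_of_lt_of_le hc1 (hqmono τ s)) _]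
    rw [cnt, if_neg (by omega)]
    have hfe : (ptnrsW (μAS τ) s).filter
        (fun x => prefSA s none + 1 ≤ prefSA s (some x)) = ptnrsW (μAS τ) s := by
      apply Finset.filter_true_of_mem
      intro x hx
      exact Nat.succ_le_of_lt (((hSt τ).1 (x, s) (mem_ptnrsW.1 hx)).2)
    rw [hfe]
    omega
  have hup : ¬ (prefSA s none + 1 ≤
      prefSA s (spot (prefSA s) (qs (τ + 1) s) (ptnrsW (μAS (τ + 1)) s) k)) := by
    intro h
    have hle := (spot_ge_iff (prefSA s) ((hV (τ + 1)).2.2 s) hc1 _).1 h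
    rw [cnt, if_neg (by omega)] at hle
    have := Finset.card_le_card (Finset.filter_subset
      (fun x => prefSA s none + 1 ≤ prefSA s (some x)) (ptnrsW (μAS (τ + 1)) s))
    omega
  exact hup (le_trans hlow h1)


end Stmt14
end

section
/- In an n-sided matching market, if (s₁,…,sₙ) ∈ S₁ × … × Sₙ blocks the matching μ, then there exists k ∈ {1,…,n−1} such that μ_{j−1}(s_{j−1}) = s_j for all 2 ≤ j ≤ k, s_{k+1} >_{s_k} μ_k(s_k), and s_k >_{s_{k+1}} μ_k(s_{k+1}). Consequently, defining M₁ = S₁ and, for k > 1, M_k = the set of persons in S_k matched in μ_{k−1}, at least one of the restricted matchings μ_k|_(M_k, S_{k+1}) is blocked by the pair (s_k, s_{k+1}). -/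
open scoped Classical

namespace Stmt17

variable {ι : Type*}

/-- The rank of the right-partner of `m` in the two-sided matching `ν` under the
preferences `prefR m` (self-based: `prefR m m` is the rank of staying single, which is
used when `m` is unmatched); higher rank = more preferred. -/
noncomputable def rval (prefR : ι → ι → ℕ) (ν : Finset (ι × ι)) (m : ι) : ℕ :=
  WithBot.unbotD (prefR m m) (((ν.filter fun p => p.1 = m).image fun p => prefR m p.2).max)

/-- The rank of the left-partner of `w` in `ν` under the preferences `prefL w`. -/
noncomputable def lval (prefL : ι → ι → ℕ) (ν : Finset (ι × ι)) (w : ι) : ℕ :=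
  WithBot.unbotD (prefL w w) (((ν.filter fun p => p.2 = w).image fun p => prefL w p.1).max)

/-- The pair `(m, w)` blocks the two-sided matching `ν`: both strictly prefer each
other to their current partners (or to staying single if unmatched). -/
def PairBlocks (prefR prefL : ι → ι → ℕ) (ν : Finset (ι × ι)) (m w : ι) : Prop :=
  rval prefR ν m < prefR m w ∧ lval prefL ν w < prefL w m

/-- Individual rationality of a two-sided matching. -/
def PairIR (prefR prefL : ι → ι → ℕ) (ν : Finset (ι × ι)) : Prop :=
  ∀ p ∈ ν, prefR p.1 p.1 < prefR p.1 p.2 ∧ prefL p.2 p.2 < prefL p.2 p.1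

/-- A valid `n`-sided matching on the sides `Ssides 0, …, Ssides (n-1)`: each tuple
lies in the product of the sides and every person appears in at most one tuple. -/
def TupleMatching (n : ℕ) (Ssides : ℕ → Finset ι) (μ : Finset (Fin n → ι)) : Prop :=
  (∀ t ∈ μ, ∀ k : Fin n, t k ∈ Ssides k) ∧
  (∀ t ∈ μ, ∀ t' ∈ μ, ∀ k : Fin n, t k = t' k → t = t')

/-- The induced two-sided matching `μ_k` between sides `k` and `k + 1`. -/
noncomputable def proj (n : ℕ) (μ : Finset (Fin n → ι)) (k : ℕ) (h : k + 1 < n) :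
    Finset (ι × ι) :=
  μ.image fun t => (t ⟨k, Nat.lt_of_succ_lt h⟩, t ⟨k + 1, h⟩)

/-- Individual rationality of an `n`-sided matching: every induced two-sided matching
is individually rational. -/
def NIR (n : ℕ) (prefR prefL : ι → ι → ℕ) (μ : Finset (Fin n → ι)) : Prop :=
  ∀ k, ∀ h : k + 1 < n, PairIR prefR prefL (proj n μ k h)

/-- The tuple `s ∉ μ` blocks the `n`-sided matching `μ`: for every `k`, either
`(s_k, s_{k+1})` is already matched in `μ_k` or it blocks `μ_k`. -/
def NBlocks (n : ℕ) (prefR prefL : ι → ι → ℕ) (Ssides : ℕ → Finset ι)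
    (μ : Finset (Fin n → ι)) (s : Fin n → ι) : Prop :=
  (∀ k : Fin n, s k ∈ Ssides k) ∧ s ∉ μ ∧
  ∀ k, ∀ h : k + 1 < n,
    (s ⟨k, Nat.lt_of_succ_lt h⟩, s ⟨k + 1, h⟩) ∈ proj n μ k h ∨
    PairBlocks prefR prefL (proj n μ k h) (s ⟨k, Nat.lt_of_succ_lt h⟩) (s ⟨k + 1, h⟩)

/-- Stability of an `n`-sided matching. -/
def NStable (n : ℕ) (prefR prefL : ι → ι → ℕ) (Ssides : ℕ → Finset ι)
    (μ : Finset (Fin n → ι)) : Prop :=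
  NIR n prefR prefL μ ∧ ∀ s : Fin n → ι, ¬ NBlocks n prefR prefL Ssides μ s

/-- If the tuple `(s_0, …, s_{n-1})` blocks the matching `μ` of an
`n`-sided market, then there exists `k` with `k + 1 < n` such that all earlier
consecutive pairs of `s` are matched in `μ`, and `(s_k, s_{k+1})` is a blocking pair of
`μ_k`; consequently (since `s_k` is matched in `μ_{k-1}` whenever `k > 0`, i.e.
`s_k ∈ M_k`) the restricted matching `μ_k|_(M_k, S_{k+1})` is blocked by
`(s_k, s_{k+1})`. -/
theorem blocking_tuple_implies_blocking_pair
    (n : ℕ) (hn : 2 ≤ n) (Ssides : ℕ → Finset ι)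
    (hdisj : ∀ k < n, ∀ j < n, k ≠ j → Disjoint (Ssides k) (Ssides j))
    (prefR prefL : ι → ι → ℕ)
    (hR : ∀ k, k + 1 < n → ∀ p ∈ Ssides k,
      Set.InjOn (prefR p) (insert p (Ssides (k + 1) : Set ι)))
    (hL : ∀ k, k + 1 < n → ∀ p ∈ Ssides (k + 1),
      Set.InjOn (prefL p) (insert p (Ssides k : Set ι)))
    (μ : Finset (Fin n → ι)) (hμ : TupleMatching n Ssides μ)
    (s : Fin n → ι) (hblock : NBlocks n prefR prefL Ssides μ s) :
    ∃ k, ∃ h : k + 1 < n,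
      (∀ i, ∀ hi : i < k,
        (s ⟨i, by omega⟩, s ⟨i + 1, by omega⟩) ∈ proj n μ i (by omega)) ∧
      PairBlocks prefR prefL (proj n μ k h)
        (s ⟨k, Nat.lt_of_succ_lt h⟩) (s ⟨k + 1, h⟩) ∧
      (k = 0 ∨ ∃ t ∈ μ, t ⟨k, Nat.lt_of_succ_lt h⟩ = s ⟨k, Nat.lt_of_succ_lt h⟩) := by
  obtain ⟨hS, hnot, hk⟩ := hblock
  have hex : ∃ k, ∃ h : k + 1 < n,
      (s ⟨k, Nat.lt_of_succ_lt h⟩, s ⟨k + 1, h⟩) ∉ proj n μ k h := by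
    by_contra hall
    push_neg at hall
    have h0 : 0 + 1 < n := by omega
    obtain ⟨t, ht, hte⟩ := Finset.mem_image.mp (hall 0 h0)
    have key : ∀ j, ∀ hj : j < n, t ⟨j, hj⟩ = s ⟨j, hj⟩ := by
      intro j
      induction j with
      | zero =>
        intro hj
        exact congrArg Prod.fst hte
      | succ m ih =>
        intro hj
        have hm : m + 1 < n := hj
        obtain ⟨t', ht', hte'⟩ := Finset.mem_image.mp (hall m hm)
        have h1 : t' ⟨m, by omega⟩ = s ⟨m, by omega⟩ := congrArg Prod.fst hte'
        have h2 : t' ⟨m + 1, hm⟩ = s ⟨m + 1, hm⟩ := congrArg Prod.snd hte'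
        have h3 : t ⟨m, by omega⟩ = t' ⟨m, by omega⟩ := by
          rw [ih (by omega), h1]
        have ht'' : t = t' := hμ.2 t ht t' ht' _ h3
        rw [ht'']; exact h2
    have hts : t = s := funext fun i => by
      have := key i.1 i.2
      simpa using this
    exact hnot (hts ▸ ht)
  have hexN : ∃ k, (∃ h : k + 1 < n,
      (s ⟨k, Nat.lt_of_succ_lt h⟩, s ⟨k + 1, h⟩) ∉ proj n μ k h) := hex
  set m := Nat.find hexN with hm
  obtain ⟨hmn, hmblk⟩ := Nat.find_spec hexN
  refine ⟨m, hmn, ?_, ?_, ?_⟩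
  · intro i hi
    have hin : i + 1 < n := by omega
    have := Nat.find_min hexN hi
    push_neg at this
    exact this hin
  · rcases hk m hmn with h | h
    · exact absurd h hmblk
    · exact h
  · rcases Nat.eq_zero_or_pos m with h0 | h0
    · exact Or.inl h0
    · right
      have hi : m - 1 < m := by omega
      have hin : (m - 1) + 1 < n := by omega
      have hmem := Nat.find_min hexN hi
      push_neg at hmem
      obtain ⟨t, ht, hte⟩ := Finset.mem_image.mp (hmem hin)
      refine ⟨t, ht, ?_⟩
      have h2 : t ⟨(m - 1) + 1, hin⟩ = s ⟨(m - 1) + 1, hin⟩ := congrArg Prod.snd hte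
      have heq : (⟨(m - 1) + 1, hin⟩ : Fin n) = ⟨m, Nat.lt_of_succ_lt hmn⟩ := by
        apply Fin.ext; simp; omega
      rw [heq] at h2
      exact h2

end Stmt17
end
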